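/- arXiv:1802.07142 — 8 statements merged into one kernel-verified Lean document; each statement's English description precedes it below -/
import Mathlib

section
/- For every finite subgraph G of the complete bipartite graph on vertex sets I × {male} and I × {female} (where I is a finite interval of integers, with preferences given by the total order on I, compatibility given by the edges of G, and any compatible partner preferred to being unmatched), there exists exactly one stable matching of G. -/
/-- `M` is a matching of the bipartite compatibility graph with male set `A`,
female set `B`, and compatibility relation `E` (males and females indexed by integers,
larger index = more attractive). -/
def IsBipMatching (E : ℤ → ℤ → Prop) (A B : Finset ℤ) (M : Finset (ℤ × ℤ)) : Prop :=
  (∀ e ∈ M, e.1 ∈ A ∧ e.2 ∈ B ∧ E e.1 e.2) ∧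
  (∀ e ∈ M, ∀ f ∈ M, e.1 = f.1 → e = f) ∧
  (∀ e ∈ M, ∀ f ∈ M, e.2 = f.2 → e = f)

/-- A matching is stable if there is no compatible pair `(i, j)` such that male `i` is
unmatched or matched to a female less attractive than `j`, and female `j` is unmatched or
matched to a male less attractive than `i` (the convention `-∞ < k` is encoded by
quantifying only over actual partners). -/
def IsStableBipMatching (E : ℤ → ℤ → Prop) (A B : Finset ℤ) (M : Finset (ℤ × ℤ)) : Prop :=
  IsBipMatching E A B M ∧
  ¬ ∃ i ∈ A, ∃ j ∈ B, E i j ∧ (∀ j', (i, j') ∈ M → j' < j) ∧ (∀ i', (i', j) ∈ M → i' < i)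

private lemma stable_empty_case (E : ℤ → ℤ → Prop) (A B : Finset ℤ)
    (h : ∀ i ∈ A, ∀ j ∈ B, ¬ E i j) :
    ∃! M : Finset (ℤ × ℤ), IsStableBipMatching E A B M := by
  refine ⟨∅, ⟨⟨fun e he => absurd he (Finset.notMem_empty e),
      fun e he => absurd he (Finset.notMem_empty e),
      fun e he => absurd he (Finset.notMem_empty e)⟩, ?_⟩, ?_⟩
  · rintro ⟨i, hi, j, hj, hE, -, -⟩
    exact h i hi j hj hE
  · rintro M ⟨⟨hM1, -, -⟩, -⟩
    rw [Finset.eq_empty_iff_forall_notMem]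
    intro e he
    obtain ⟨h1, h2, h3⟩ := hM1 e he
    exact h e.1 h1 e.2 h2 h3

private lemma stable_unique_aux : ∀ n : ℕ, ∀ A B : Finset ℤ, A.card ≤ n →
    ∀ E : ℤ → ℤ → Prop, ∃! M : Finset (ℤ × ℤ), IsStableBipMatching E A B M := by
  intro n
  induction n with
  | zero =>
    intro A B hA E
    have hAe : A = ∅ := Finset.card_eq_zero.mp (Nat.le_zero.mp hA)
    subst hAe
    exact stable_empty_case E ∅ B (by simp)
  | succ n ih =>
    intro A B hA E
    classical
    by_cases hT : ∃ i ∈ A, ∃ j ∈ B, E i j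
    · set T := A.filter (fun i => ∃ j ∈ B, E i j) with hTdef
      have hTne : T.Nonempty := by
        obtain ⟨i, hi, j, hj, hE⟩ := hT
        exact ⟨i, Finset.mem_filter.mpr ⟨hi, j, hj, hE⟩⟩
      set i0 := T.max' hTne with hi0def
      have hi0T : i0 ∈ T := T.max'_mem hTne
      obtain ⟨hi0A, j0', hj0', hE0'⟩ := Finset.mem_filter.mp hi0T
      have hmaxi : ∀ x ∈ A, ∀ y ∈ B, E x y → x ≤ i0 := by
        intro x hx y hy hE
        exact T.le_max' x (Finset.mem_filter.mpr ⟨hx, y, hy, hE⟩)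
      set S := B.filter (fun j => E i0 j) with hSdef
      have hSne : S.Nonempty := ⟨j0', Finset.mem_filter.mpr ⟨hj0', hE0'⟩⟩
      set j0 := S.max' hSne with hj0def
      have hj0S : j0 ∈ S := S.max'_mem hSne
      obtain ⟨hj0B, hE0⟩ := Finset.mem_filter.mp hj0S
      have hmaxj : ∀ y ∈ B, E i0 y → y ≤ j0 := by
        intro y hy hE
        exact S.le_max' y (Finset.mem_filter.mpr ⟨hy, hE⟩)
      -- inductive step on erased sets
      have hcard : (A.erase i0).card ≤ n := by
        have := Finset.card_erase_of_mem hi0A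
        omega
      obtain ⟨M', hM', hM'uniq⟩ := ih (A.erase i0) (B.erase j0) hcard E
      obtain ⟨⟨hM'1, hM'2, hM'3⟩, hM'stab⟩ := hM'
      set M : Finset (ℤ × ℤ) := insert (i0, j0) M' with hMdef
      have hmemM : ∀ e ∈ M, e = (i0, j0) ∨ e ∈ M' := fun e he => Finset.mem_insert.mp he
      have hM'ne1 : ∀ e ∈ M', e.1 ≠ i0 := by
        intro e he
        exact Finset.ne_of_mem_erase (hM'1 e he).1
      have hM'ne2 : ∀ e ∈ M', e.2 ≠ j0 := by
        intro e he
        exact Finset.ne_of_mem_erase (hM'1 e he).2.1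
      have hMmatch : IsBipMatching E A B M := by
        refine ⟨?_, ?_, ?_⟩
        · intro e he
          rcases hmemM e he with rfl | he'
          · exact ⟨hi0A, hj0B, hE0⟩
          · obtain ⟨h1, h2, h3⟩ := hM'1 e he'
            exact ⟨Finset.mem_of_mem_erase h1, Finset.mem_of_mem_erase h2, h3⟩
        · intro e he f hf h1
          rcases hmemM e he with rfl | he' <;> rcases hmemM f hf with rfl | hf'
          · rfl
          · exact absurd h1.symm (hM'ne1 f hf')
          · exact absurd h1 (hM'ne1 e he')
          · exact hM'2 e he' f hf' h1
        · intro e he f hf h2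
          rcases hmemM e he with rfl | he' <;> rcases hmemM f hf with rfl | hf'
          · rfl
          · exact absurd h2.symm (hM'ne2 f hf')
          · exact absurd h2 (hM'ne2 e he')
          · exact hM'3 e he' f hf' h2
      have hMstab : IsStableBipMatching E A B M := by
        refine ⟨hMmatch, ?_⟩
        rintro ⟨x, hx, y, hy, hExy, hx', hy'⟩
        by_cases hxi : x = i0
        · subst hxi
          have h1 : j0 < y := hx' j0 (Finset.mem_insert_self _ _)
          have h2 : y ≤ j0 := hmaxj y hy hExy
          omega
        by_cases hyj : y = j0
        · subst hyj
          have h1 : i0 < x := hy' i0 (Finset.mem_insert_self _ _)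
          have h2 : x ≤ i0 := hmaxi x hx j0 hj0B hExy
          omega
        apply hM'stab
        refine ⟨x, Finset.mem_erase.mpr ⟨hxi, hx⟩, y, Finset.mem_erase.mpr ⟨hyj, hy⟩,
          hExy, ?_, ?_⟩
        · intro j' hj'
          exact hx' j' (Finset.mem_insert_of_mem hj')
        · intro i' hi'
          exact hy' i' (Finset.mem_insert_of_mem hi')
      refine ⟨M, hMstab, ?_⟩
      rintro N ⟨⟨hN1, hN2, hN3⟩, hNstab⟩
      -- (i0, j0) ∈ N
      have htop : (i0, j0) ∈ N := by
        by_contra htop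
        apply hNstab
        refine ⟨i0, hi0A, j0, hj0B, hE0, ?_, ?_⟩
        · intro j' hj'
          obtain ⟨-, h2, h3⟩ := hN1 _ hj'
          have := hmaxj j' h2 h3
          rcases lt_or_eq_of_le this with h | h
          · exact h
          · exact absurd (h ▸ hj') htop
        · intro i' hi'
          obtain ⟨h1, -, h3⟩ := hN1 _ hi'
          have := hmaxi i' h1 j0 hj0B h3
          rcases lt_or_eq_of_le this with h | h
          · exact h
          · exact absurd (h ▸ hi') htop
      have hNe1 : ∀ e ∈ N, e ≠ (i0, j0) → e.1 ≠ i0 ∧ e.2 ≠ j0 := by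
        intro e he hne
        constructor
        · intro h
          exact hne (hN2 e he (i0, j0) htop h)
        · intro h
          exact hne (hN3 e he (i0, j0) htop h)
      have hNerase : IsStableBipMatching E (A.erase i0) (B.erase j0) (N.erase (i0, j0)) := by
        refine ⟨⟨?_, ?_, ?_⟩, ?_⟩
        · intro e he
          obtain ⟨hne, heN⟩ := Finset.mem_erase.mp he
          obtain ⟨h1, h2, h3⟩ := hN1 e heN
          obtain ⟨hn1, hn2⟩ := hNe1 e heN hne
          exact ⟨Finset.mem_erase.mpr ⟨hn1, h1⟩, Finset.mem_erase.mpr ⟨hn2, h2⟩, h3⟩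
        · intro e he f hf h
          exact hN2 e (Finset.mem_of_mem_erase he) f (Finset.mem_of_mem_erase hf) h
        · intro e he f hf h
          exact hN3 e (Finset.mem_of_mem_erase he) f (Finset.mem_of_mem_erase hf) h
        · rintro ⟨x, hx, y, hy, hExy, hx', hy'⟩
          obtain ⟨hxne, hxA⟩ := Finset.mem_erase.mp hx
          obtain ⟨hyne, hyB⟩ := Finset.mem_erase.mp hy
          apply hNstab
          refine ⟨x, hxA, y, hyB, hExy, ?_, ?_⟩
          · intro j' hj'
            refine hx' j' (Finset.mem_erase.mpr ⟨?_, hj'⟩)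
            intro h
            exact hxne (congrArg Prod.fst h)
          · intro i' hi'
            refine hy' i' (Finset.mem_erase.mpr ⟨?_, hi'⟩)
            intro h
            exact hyne (congrArg Prod.snd h)
      have hNM' : N.erase (i0, j0) = M' := hM'uniq _ hNerase
      calc N = insert (i0, j0) (N.erase (i0, j0)) := (Finset.insert_erase htop).symm
        _ = M := by rw [hNM']
    · push_neg at hT
      exact stable_empty_case E A B hT

/-- For every subgraph (compatibility relation) of the complete bipartite graph on a finite
integer interval `I = [a, b]`, there is exactly one stable matching. -/
theorem unique_stable_matching_finite_interval (a b : ℤ) (E : ℤ → ℤ → Prop) :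
    ∃! M : Finset (ℤ × ℤ),
      IsStableBipMatching E (Finset.Icc a b) (Finset.Icc a b) M := by
  exact stable_unique_aux (Finset.Icc a b).card _ _ le_rfl E
end

section
/- Let p ∈ (0,1], q = 1-p, and let G be the random bipartite graph on {1,…,n} × {1,…,n} where each of the n² possible edges is present independently with probability p. Then the probability that the unique stable matching of G is a perfect matching equals ∏_{k=1}^{n} (1 - q^k). -/
open MeasureTheory ProbabilityTheory

/-- A matching is perfect if every male in `A` and every female in `B` is matched. -/
def IsPerfectBipMatching (A B : Finset ℤ) (M : Finset (ℤ × ℤ)) : Prop :=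
  (∀ i ∈ A, ∃ j, (i, j) ∈ M) ∧ (∀ j ∈ B, ∃ i, (i, j) ∈ M)

open Finset in
def Q (E : ℤ → ℤ → Prop) : ℕ → Finset ℤ → Prop
  | 0, B => B = ∅
  | (m+1), B => ∃ j ∈ B, E ((m : ℤ)+1) j ∧ (∀ j' ∈ B, E ((m:ℤ)+1) j' → j' ≤ j) ∧
      Q E m (B.erase j)

open Finset in
lemma Q_imp : ∀ (m : ℕ) (B : Finset ℤ) (E E' : ℤ → ℤ → Prop),
    (∀ i j, i ∈ Finset.Icc 1 (m:ℤ) → j ∈ B → (E i j ↔ E' i j)) → Q E m B → Q E' m B := by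
  intro m
  induction m with
  | zero => intro B E E' _ h; exact h
  | succ m ih =>
    intro B E E' h
    rintro ⟨j, hjB, h1, h2, h3⟩
    have hmem : ((m:ℤ)+1) ∈ Finset.Icc (1:ℤ) ((m+1 : ℕ) : ℤ) := by
      rw [Finset.mem_Icc]; omega
    refine ⟨j, hjB, (h _ _ hmem hjB).mp h1, ?_, ?_⟩
    · intro j' hj' hE'
      exact h2 j' hj' ((h _ _ hmem hj').mpr hE')
    · refine ih _ _ _ (fun i j' hi hj' => ?_) h3
      refine h i j' ?_ (Finset.mem_of_mem_erase hj')
      rw [Finset.mem_Icc] at hi ⊢; omega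

lemma Q_congr (m : ℕ) (B : Finset ℤ) (E E' : ℤ → ℤ → Prop)
    (h : ∀ i j, i ∈ Finset.Icc 1 (m:ℤ) → j ∈ B → (E i j ↔ E' i j)) : Q E m B ↔ Q E' m B :=
  ⟨Q_imp m B E E' h, Q_imp m B E' E (fun i j hi hj => (h i j hi hj).symm)⟩

lemma allMeasurable {α : Type*} [Fintype α] (s : Set (α → Bool)) : MeasurableSet s :=
  (Set.toFinite s).measurableSet

lemma event_rep {Ω : Type*} [MeasurableSpace Ω] (C : ℤ × ℤ → Ω → Bool) (T : Finset (ℤ × ℤ))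
    (P : (ℤ → ℤ → Prop) → Prop)
    (hP : ∀ E E' : ℤ → ℤ → Prop, (∀ e ∈ T, (E e.1 e.2 ↔ E' e.1 e.2)) → (P E ↔ P E')) :
    {ω | P (fun i j => C (i, j) ω = true)} =
      (fun ω (e : T) => C e.val ω) ⁻¹'
        {g : T → Bool | P (fun i j => ∃ h : (i, j) ∈ T, g ⟨(i, j), h⟩ = true)} := by
  ext ω
  simp only [Set.mem_setOf_eq, Set.mem_preimage]
  refine hP _ _ (fun e he => ?_)
  obtain ⟨i, j⟩ := e
  constructor
  · intro h; exact ⟨he, h⟩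
  · rintro ⟨h, hg⟩; exact hg

lemma sum_filter_pow (q : ℝ) : ∀ (n : ℕ) (B : Finset ℤ), B.card = n →
    (∑ j ∈ B, q ^ (B.filter (fun j' => j < j')).card) = ∑ r ∈ Finset.range n, q ^ r := by
  intro n
  induction n with
  | zero =>
    intro B hB
    rw [Finset.card_eq_zero] at hB
    subst hB; simp
  | succ n ih =>
    intro B hB
    have hne : B.Nonempty := by
      rw [← Finset.card_pos, hB]; omega
    set j₀ := B.min' hne with hj₀
    have hj₀B : j₀ ∈ B := Finset.min'_mem B hne
    have hmin : ∀ x ∈ B, j₀ ≤ x := fun x hx => Finset.min'_le B x hx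
    have hfilt : B.filter (fun j' => j₀ < j') = B.erase j₀ := by
      ext x
      simp only [Finset.mem_filter, Finset.mem_erase]
      constructor
      · rintro ⟨hx, hlt⟩; exact ⟨by omega, hx⟩
      · rintro ⟨hne', hx⟩; have := hmin x hx; exact ⟨hx, by omega⟩
    have hcard : (B.erase j₀).card = n := by
      rw [Finset.card_erase_of_mem hj₀B, hB]; omega
    rw [← Finset.add_sum_erase B _ hj₀B]
    have hsame : ∀ j ∈ B.erase j₀,
        (B.filter (fun j' => j < j')).card = ((B.erase j₀).filter (fun j' => j < j')).card := by
      intro j hj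
      congr 1
      ext x
      simp only [Finset.mem_filter, Finset.mem_erase]
      constructor
      · rintro ⟨hx, hlt⟩
        have hj0le := hmin j (Finset.mem_of_mem_erase hj)
        exact ⟨⟨by omega, hx⟩, hlt⟩
      · rintro ⟨⟨_, hx⟩, hlt⟩; exact ⟨hx, hlt⟩
    rw [Finset.sum_congr rfl (fun j hj => by rw [hsame j hj]),
      ih _ hcard, hfilt, hcard, Finset.sum_range_succ]
    ring

def Dset {Ω : Type*} (C : ℤ × ℤ → Ω → Bool) (m : ℕ) (B : Finset ℤ) (j : ℤ) : Set Ω :=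
  {ω | C ((m:ℤ)+1, j) ω = true ∧ ∀ j' ∈ B, j < j' → ¬ (C ((m:ℤ)+1, j') ω = true)}

def QEset {Ω : Type*} (C : ℤ × ℤ → Ω → Bool) (m : ℕ) (B : Finset ℤ) (j : ℤ) : Set Ω :=
  {ω | Q (fun i j' => C (i, j') ω = true) m (B.erase j)}

lemma prob_Q {Ω : Type*} [MeasurableSpace Ω] (μ : Measure Ω) [IsProbabilityMeasure μ]
    (p q : ℝ) (hp0 : 0 < p) (hp1 : p ≤ 1) (hq : q = 1 - p)
    (C : ℤ × ℤ → Ω → Bool) (hmeas : ∀ e, Measurable (C e))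
    (hind : iIndepFun C μ)
    (hBer : ∀ e, μ {ω | C e ω = true} = ENNReal.ofReal p) :
    ∀ (m : ℕ) (B : Finset ℤ), B.card = m →
      μ {ω | Q (fun i j => C (i, j) ω = true) m B}
        = ENNReal.ofReal (∏ k ∈ Finset.Icc 1 m, (1 - q ^ k)) := by
  have hq0 : 0 ≤ q := by rw [hq]; linarith
  have hq1 : q < 1 := by rw [hq]; linarith
  have hPi : ∀ m : ℕ, 0 ≤ ∏ k ∈ Finset.Icc 1 m, (1 - q ^ k) := by
    intro m
    refine Finset.prod_nonneg (fun k _ => ?_)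
    have := pow_le_one₀ hq0 hq1.le (n := k)
    linarith
  have hBtrue : ∀ e, μ (C e ⁻¹' {true}) = ENNReal.ofReal p := fun e => hBer e
  have hBfalse : ∀ e, μ (C e ⁻¹' {false}) = ENNReal.ofReal q := by
    intro e
    have hcompl : C e ⁻¹' {false} = (C e ⁻¹' {true})ᶜ := by
      ext ω
      simp [Set.mem_preimage]
    rw [hcompl, measure_compl ((hmeas e) (measurableSet_singleton true)) (measure_ne_top μ _),
      hBtrue, measure_univ]
    rw [hq, ← ENNReal.ofReal_one, ← ENNReal.ofReal_sub 1 hp0.le]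
  intro m
  induction m with
  | zero =>
    intro B hB
    rw [Finset.card_eq_zero] at hB
    subst hB
    have h : {ω : Ω | Q (fun i j => C (i, j) ω = true) 0 ∅} = Set.univ := by
      ext ω; simp [Q]
    rw [h, measure_univ]
    simp
  | succ m ih =>
    intro B hB
    set T₁ : Finset (ℤ × ℤ) := ({(m:ℤ)+1} : Finset ℤ) ×ˢ B with hT₁
    set T₂ : Finset (ℤ × ℤ) := (Finset.Icc (1:ℤ) (m:ℤ)) ×ˢ B with hT₂
    -- the union decomposition
    have hset : {ω | Q (fun i j => C (i, j) ω = true) (m+1) B}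
        = ⋃ j ∈ B, Dset C m B j ∩ QEset C m B j := by
      ext ω
      simp only [Q, Set.mem_setOf_eq, Set.mem_iUnion, Set.mem_inter_iff, Dset, QEset,
        exists_prop]
      constructor
      · rintro ⟨j, hj, h1, h2, h3⟩
        exact ⟨j, hj, ⟨h1, fun j' hj' hlt hE => by have := h2 j' hj' hE; omega⟩, h3⟩
      · rintro ⟨j, hj, ⟨⟨h1, h2⟩, h3⟩⟩
        refine ⟨j, hj, h1, fun j' hj' hE => ?_, h3⟩
        by_contra hgt
        push_neg at hgt
        exact h2 j' hj' hgt hE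
    -- preimage representations
    have hDrep : ∀ j ∈ B, ∃ A : Set (T₁ → Bool),
        Dset C m B j = (fun ω (e : T₁) => C e.val ω) ⁻¹' A := by
      intro j hj
      refine ⟨_, event_rep C T₁
        (fun E => E ((m:ℤ)+1) j ∧ ∀ j' ∈ B, j < j' → ¬ E ((m:ℤ)+1) j') ?_⟩
      intro E E' hEE'
      have key : ∀ j' ∈ B, (E ((m:ℤ)+1) j' ↔ E' ((m:ℤ)+1) j') := fun j' hj' =>
        hEE' ((m:ℤ)+1, j') (Finset.mem_product.mpr ⟨Finset.mem_singleton_self _, hj'⟩)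
      constructor
      · rintro ⟨h1, h2⟩
        exact ⟨(key j hj).mp h1, fun j' hj' hlt hE' =>
          h2 j' hj' hlt ((key j' hj').mpr hE')⟩
      · rintro ⟨h1, h2⟩
        exact ⟨(key j hj).mpr h1, fun j' hj' hlt hE =>
          h2 j' hj' hlt ((key j' hj').mp hE)⟩
    have hQrep : ∀ j : ℤ, ∃ A : Set (T₂ → Bool),
        QEset C m B j = (fun ω (e : T₂) => C e.val ω) ⁻¹' A := by
      intro j
      refine ⟨_, event_rep C T₂ (fun E => Q E m (B.erase j)) ?_⟩
      intro E E' hEE'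
      refine Q_congr m (B.erase j) E E' (fun i j' hi hj' => ?_)
      exact hEE' (i, j') (Finset.mem_product.mpr ⟨hi, Finset.mem_of_mem_erase hj'⟩)
    have hπ₁ : Measurable (fun ω (e : T₁) => C e.val ω) :=
      measurable_pi_lambda _ (fun e => hmeas e.val)
    have hπ₂ : Measurable (fun ω (e : T₂) => C e.val ω) :=
      measurable_pi_lambda _ (fun e => hmeas e.val)
    have hDm : ∀ j ∈ B, MeasurableSet (Dset C m B j) := by
      intro j hj
      obtain ⟨A, hA⟩ := hDrep j hj
      rw [hA]; exact hπ₁ (allMeasurable A)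
    have hQm : ∀ j : ℤ, MeasurableSet (QEset C m B j) := by
      intro j
      obtain ⟨A, hA⟩ := hQrep j
      rw [hA]; exact hπ₂ (allMeasurable A)
    -- disjointness
    have hpair : Set.PairwiseDisjoint (↑B : Set ℤ) (fun j => Dset C m B j ∩ QEset C m B j) := by
      have key : ∀ a ∈ B, ∀ b ∈ B, a < b →
          ∀ ω, ω ∈ Dset C m B a ∩ QEset C m B a → ω ∈ Dset C m B b ∩ QEset C m B b → False := by
        intro a ha b hb hab ω hωa hωb
        exact hωa.1.2 b hb hab hωb.1.1
      intro a ha b hb hne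
      have hd : Disjoint (Dset C m B a ∩ QEset C m B a) (Dset C m B b ∩ QEset C m B b) := by
        rw [Set.disjoint_left]
        intro ω hωa hωb
        rcases hne.lt_or_gt with h | h
        · exact key a ha b hb h ω hωa hωb
        · exact key b hb a ha h ω hωb hωa
      exact hd
    -- independence
    have hdisj : Disjoint T₁ T₂ := by
      rw [Finset.disjoint_left]
      rintro ⟨i, j⟩ h1 h2
      rw [hT₁, Finset.mem_product, Finset.mem_singleton] at h1
      rw [hT₂, Finset.mem_product, Finset.mem_Icc] at h2
      omega
    have hIndep : IndepFun (fun ω (e : T₁) => C e.val ω) (fun ω (e : T₂) => C e.val ω) μ :=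
      hind.indepFun_finset T₁ T₂ hdisj hmeas
    have hprod : ∀ j ∈ B, μ (Dset C m B j ∩ QEset C m B j)
        = μ (Dset C m B j) * μ (QEset C m B j) := by
      intro j hj
      obtain ⟨A₁, h₁⟩ := hDrep j hj
      obtain ⟨A₂, h₂⟩ := hQrep j
      rw [h₁, h₂]
      exact hIndep.measure_inter_preimage_eq_mul _ _ (allMeasurable _) (allMeasurable _)
    -- μ (Dset j)
    have hμD : ∀ j ∈ B, μ (Dset C m B j)
        = ENNReal.ofReal (p * q ^ (B.filter (fun j' => j < j')).card) := by
      intro j hj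
      set F := B.filter (fun j' => j < j') with hF
      set sets : ℤ × ℤ → Set Bool := fun e => if e.2 = j then {true} else {false} with hsets
      have hnotmem : ((m:ℤ)+1, j) ∉ F.image (fun j' => ((m:ℤ)+1, j')) := by
        simp only [Finset.mem_image, hF, Finset.mem_filter]
        rintro ⟨j', ⟨_, hlt⟩, heq⟩
        have : j' = j := congrArg Prod.snd heq
        omega
      have hsets_pos : sets ((m:ℤ)+1, j) = {true} := by simp [hsets]
      have hsets_neg : ∀ j' : ℤ, j' ≠ j → sets ((m:ℤ)+1, j') = {false} := by
        intro j' h; simp [hsets, h]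
      have hDeq : Dset C m B j
          = ⋂ e ∈ insert ((m:ℤ)+1, j) (F.image (fun j' => ((m:ℤ)+1, j'))), C e ⁻¹' sets e := by
        ext ω
        simp only [Dset, Set.mem_setOf_eq, Set.mem_iInter, Finset.mem_insert, Finset.mem_image,
          hF, Finset.mem_filter]
        constructor
        · rintro ⟨h1, h2⟩ e he
          rcases he with rfl | ⟨j', ⟨hj'B, hlt⟩, rfl⟩
          · rw [Set.mem_preimage, hsets_pos, Set.mem_singleton_iff]
            exact h1
          · rw [Set.mem_preimage, hsets_neg j' (by omega), Set.mem_singleton_iff]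
            exact Bool.eq_false_iff.mpr (h2 j' hj'B hlt)
        · intro h
          constructor
          · have hh := h _ (Or.inl rfl)
            rw [Set.mem_preimage, hsets_pos, Set.mem_singleton_iff] at hh
            exact hh
          · intro j' hj'B hlt hE
            have hh := h _ (Or.inr ⟨j', ⟨hj'B, hlt⟩, rfl⟩)
            rw [Set.mem_preimage, hsets_neg j' (by omega), Set.mem_singleton_iff, hE] at hh
            exact Bool.noConfusion hh
      have hmeasSets : ∀ e ∈ insert ((m:ℤ)+1, j) (F.image fun j' => ((m:ℤ)+1, j')),
          MeasurableSet (sets e) := by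
        intro e _
        by_cases h : e.2 = j <;> simp [hsets, h]
      have hμinter := hind.measure_inter_preimage_eq_mul
        (insert ((m:ℤ)+1, j) (F.image fun j' => ((m:ℤ)+1, j'))) (sets := sets) hmeasSets
      rw [hDeq, hμinter, Finset.prod_insert hnotmem]
      rw [hsets_pos, hBtrue]
      have h2 : ∀ e ∈ F.image (fun j' => ((m:ℤ)+1, j')), μ (C e ⁻¹' sets e)
          = ENNReal.ofReal q := by
        intro e he
        simp only [Finset.mem_image, hF, Finset.mem_filter] at he
        obtain ⟨j', ⟨hj'B, hlt⟩, rfl⟩ := he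
        rw [hsets_neg j' (by omega), hBfalse]
      rw [Finset.prod_congr rfl h2, Finset.prod_const,
        Finset.card_image_of_injective _ (fun a b h => congrArg Prod.snd h),
        ← ENNReal.ofReal_pow hq0, ← ENNReal.ofReal_mul hp0.le]
    -- combine
    rw [hset, measure_biUnion_finset hpair (fun j hj => (hDm j hj).inter (hQm j))]
    have hterm : ∀ j ∈ B, μ (Dset C m B j ∩ QEset C m B j)
        = ENNReal.ofReal (p * q ^ (B.filter (fun j' => j < j')).card
            * ∏ k ∈ Finset.Icc 1 m, (1 - q ^ k)) := by
      intro j hj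
      have hcard : (B.erase j).card = m := by rw [Finset.card_erase_of_mem hj, hB]; omega
      have h3 : μ (QEset C m B j) = ENNReal.ofReal (∏ k ∈ Finset.Icc 1 m, (1 - q ^ k)) :=
        ih (B.erase j) hcard
      rw [hprod j hj, hμD j hj, h3,
        ← ENNReal.ofReal_mul (mul_nonneg hp0.le (pow_nonneg hq0 _))]
    rw [Finset.sum_congr rfl hterm,
      ← ENNReal.ofReal_sum_of_nonneg (fun j _ =>
        mul_nonneg (mul_nonneg hp0.le (pow_nonneg hq0 _)) (hPi m))]
    congr 1
    rw [Finset.prod_Icc_succ_top (by omega : 1 ≤ m+1)]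
    have hgeo : p * (∑ r ∈ Finset.range (m+1), q ^ r) = 1 - q ^ (m+1) := by
      have h := geom_sum_mul q (m+1)
      have hp' : p = 1 - q := by rw [hq]; ring
      linear_combination (-1 : ℝ) * h + (∑ i ∈ Finset.range (m+1), q ^ i) * hp'
    calc ∑ j ∈ B, p * q ^ (B.filter (fun j' => j < j')).card * ∏ k ∈ Finset.Icc 1 m, (1 - q^k)
        = (∑ j ∈ B, q ^ (B.filter (fun j' => j < j')).card)
            * (p * ∏ k ∈ Finset.Icc 1 m, (1 - q^k)) := by
          rw [Finset.sum_mul]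
          exact Finset.sum_congr rfl (fun j _ => by ring)
      _ = _ := by
          rw [sum_filter_pow q (m+1) B hB]
          linear_combination (∏ k ∈ Finset.Icc 1 m, (1 - q ^ k)) * hgeo

open Finset in
lemma exists_stable_perfect_iff (E : ℤ → ℤ → Prop) :
    ∀ (m : ℕ) (B : Finset ℤ),
      (∃ M, IsStableBipMatching E (Finset.Icc 1 (m:ℤ)) B M ∧
            IsPerfectBipMatching (Finset.Icc 1 (m:ℤ)) B M) ↔ Q E m B := by
  intro m
  induction m with
  | zero =>
    intro B
    simp only [Nat.cast_zero, Q]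
    constructor
    · rintro ⟨M, ⟨⟨hM1, _, _⟩, _⟩, ⟨_, hMB⟩⟩
      by_contra hB
      obtain ⟨j, hj⟩ := Finset.nonempty_iff_ne_empty.mpr hB
      obtain ⟨i, hi⟩ := hMB j hj
      have h := (hM1 _ hi).1
      rw [Finset.mem_Icc] at h; omega
    · rintro rfl
      refine ⟨∅, ⟨⟨by simp, by simp, by simp⟩, ?_⟩, by simp, by simp⟩
      rintro ⟨i, hi, -⟩
      rw [Finset.mem_Icc] at hi; omega
  | succ m ih =>
    intro B
    simp only [Q]
    have hcast : ((m+1 : ℕ) : ℤ) = (m:ℤ)+1 := by push_cast; ring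
    rw [hcast]
    have hm1A : ((m:ℤ)+1) ∈ Finset.Icc (1:ℤ) ((m:ℤ)+1) := by rw [Finset.mem_Icc]; omega
    constructor
    · rintro ⟨M, ⟨⟨hM1, hMl, hMr⟩, hStab⟩, hPA, hPB⟩
      obtain ⟨j, hjM⟩ := hPA _ hm1A
      have hjB : j ∈ B := (hM1 _ hjM).2.1
      have hjE : E ((m:ℤ)+1) j := (hM1 _ hjM).2.2
      have hmax : ∀ j' ∈ B, E ((m:ℤ)+1) j' → j' ≤ j := by
        intro j' hj'B hj'E
        by_contra hlt
        push_neg at hlt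
        refine hStab ⟨(m:ℤ)+1, hm1A, j', hj'B, hj'E, ?_, ?_⟩
        · intro j'' hj''
          have h := hMl _ hj'' _ hjM rfl
          have : j'' = j := congrArg Prod.snd h
          omega
        · intro i' hi'
          have hi'A := (hM1 _ hi').1
          rw [Finset.mem_Icc] at hi'A
          rcases eq_or_lt_of_le hi'A.2 with heq | hlt'
          · exfalso
            subst heq
            have h := hMl _ hi' _ hjM rfl
            have : j' = j := congrArg Prod.snd h
            omega
          · exact hlt'
      refine ⟨j, hjB, hjE, hmax, (ih (B.erase j)).mp
        ⟨M.erase ((m:ℤ)+1, j), ⟨⟨?_, ?_, ?_⟩, ?_⟩, ?_, ?_⟩⟩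
      · intro e he
        have heM := Finset.mem_of_mem_erase he
        have hne := Finset.ne_of_mem_erase he
        obtain ⟨hA, hB', hE⟩ := hM1 _ heM
        rw [Finset.mem_Icc] at hA
        have h1 : e.1 ≠ (m:ℤ)+1 := by
          intro hfst
          exact hne (hMl _ heM _ hjM (by rw [hfst]))
        have h2 : e.2 ≠ j := by
          intro hsnd
          exact hne (hMr _ heM _ hjM (by rw [hsnd]))
        exact ⟨by rw [Finset.mem_Icc]; omega, Finset.mem_erase.mpr ⟨h2, hB'⟩, hE⟩
      · intro e he f hf h
        exact hMl _ (Finset.mem_of_mem_erase he) _ (Finset.mem_of_mem_erase hf) h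
      · intro e he f hf h
        exact hMr _ (Finset.mem_of_mem_erase he) _ (Finset.mem_of_mem_erase hf) h
      · rintro ⟨i, hiA, j₀, hj₀, hE0, hh1, hh2⟩
        rw [Finset.mem_Icc] at hiA
        refine hStab ⟨i, by rw [Finset.mem_Icc]; omega, j₀, Finset.mem_of_mem_erase hj₀, hE0,
          ?_, ?_⟩
        · intro j' hj'
          refine hh1 j' (Finset.mem_erase.mpr ⟨?_, hj'⟩)
          intro h
          have : i = (m:ℤ)+1 := congrArg Prod.fst h
          omega
        · intro i' hi'
          refine hh2 i' (Finset.mem_erase.mpr ⟨?_, hi'⟩)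
          intro h
          have : j₀ = j := congrArg Prod.snd h
          exact (Finset.ne_of_mem_erase hj₀) this
      · intro i hi
        rw [Finset.mem_Icc] at hi
        obtain ⟨j', hj'⟩ := hPA i (by rw [Finset.mem_Icc]; omega)
        refine ⟨j', Finset.mem_erase.mpr ⟨?_, hj'⟩⟩
        intro h
        have : i = (m:ℤ)+1 := congrArg Prod.fst h
        omega
      · intro j' hj'
        obtain ⟨i, hi⟩ := hPB j' (Finset.mem_of_mem_erase hj')
        refine ⟨i, Finset.mem_erase.mpr ⟨?_, hi⟩⟩
        intro h
        have : j' = j := congrArg Prod.snd h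
        exact (Finset.ne_of_mem_erase hj') this
    · rintro ⟨j, hjB, hjE, hmax, hQ⟩
      obtain ⟨M', ⟨⟨hM1, hMl, hMr⟩, hStab⟩, hPA, hPB⟩ := (ih (B.erase j)).mpr hQ
      refine ⟨insert ((m:ℤ)+1, j) M', ⟨⟨?_, ?_, ?_⟩, ?_⟩, ?_, ?_⟩
      · intro e he
        rcases Finset.mem_insert.mp he with rfl | heM
        · exact ⟨hm1A, hjB, hjE⟩
        · obtain ⟨hA, hB', hE⟩ := hM1 _ heM
          rw [Finset.mem_Icc] at hA
          exact ⟨by rw [Finset.mem_Icc]; omega, Finset.mem_of_mem_erase hB', hE⟩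
      · intro e he f hf h
        rcases Finset.mem_insert.mp he with rfl | heM <;>
          rcases Finset.mem_insert.mp hf with rfl | hfM
        · rfl
        · exfalso
          have hA := (hM1 _ hfM).1
          rw [Finset.mem_Icc] at hA
          omega
        · exfalso
          have hA := (hM1 _ heM).1
          rw [Finset.mem_Icc] at hA
          omega
        · exact hMl _ heM _ hfM h
      · intro e he f hf h
        rcases Finset.mem_insert.mp he with rfl | heM <;>
          rcases Finset.mem_insert.mp hf with rfl | hfM
        · rfl
        · exfalso
          exact (Finset.ne_of_mem_erase ((hM1 _ hfM).2.1)) h.symm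
        · exfalso
          exact (Finset.ne_of_mem_erase ((hM1 _ heM).2.1)) h
        · exact hMr _ heM _ hfM h
      · rintro ⟨i, hiA, j₀, hj₀B, hE0, hh1, hh2⟩
        rw [Finset.mem_Icc] at hiA
        by_cases hij : i = (m:ℤ)+1
        · subst hij
          have h1 := hh1 j (Finset.mem_insert_self _ _)
          have h2 := hmax j₀ hj₀B hE0
          omega
        by_cases hj0 : j₀ = j
        · subst hj0
          have h2 := hh2 ((m:ℤ)+1) (Finset.mem_insert_self _ _)
          omega
        refine hStab ⟨i, by rw [Finset.mem_Icc]; omega, j₀, Finset.mem_erase.mpr ⟨hj0, hj₀B⟩,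
          hE0, fun j' h => hh1 j' (Finset.mem_insert_of_mem h),
          fun i' h => hh2 i' (Finset.mem_insert_of_mem h)⟩
      · intro i hi
        rw [Finset.mem_Icc] at hi
        by_cases hij : i = (m:ℤ)+1
        · exact ⟨j, hij ▸ Finset.mem_insert_self _ _⟩
        · obtain ⟨j', hj'⟩ := hPA i (by rw [Finset.mem_Icc]; omega)
          exact ⟨j', Finset.mem_insert_of_mem hj'⟩
      · intro j' hj'
        by_cases hjj : j' = j
        · exact ⟨(m:ℤ)+1, hjj ▸ Finset.mem_insert_self _ _⟩
        · obtain ⟨i, hi⟩ := hPB j' (Finset.mem_erase.mpr ⟨hjj, hj'⟩)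
          exact ⟨i, Finset.mem_insert_of_mem hi⟩

/-- For the random bipartite graph on `{1,…,n} × {1,…,n}` in which each edge is present
independently with probability `p`, the probability that the (unique) stable matching is
perfect equals `∏_{k=1}^n (1 - q^k)` where `q = 1 - p`. -/
theorem prob_stable_matching_perfect
    {Ω : Type*} [MeasurableSpace Ω] (μ : Measure Ω) [IsProbabilityMeasure μ]
    (p q : ℝ) (hp0 : 0 < p) (hp1 : p ≤ 1) (hq : q = 1 - p) (n : ℕ)
    (C : ℤ × ℤ → Ω → Bool) (hmeas : ∀ e, Measurable (C e))
    (hind : iIndepFun C μ)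
    (hBer : ∀ e, μ {ω | C e ω = true} = ENNReal.ofReal p) :
    μ {ω | ∃ M : Finset (ℤ × ℤ),
        IsStableBipMatching (fun i j => C (i, j) ω = true)
          (Finset.Icc 1 (n : ℤ)) (Finset.Icc 1 (n : ℤ)) M ∧
        IsPerfectBipMatching (Finset.Icc 1 (n : ℤ)) (Finset.Icc 1 (n : ℤ)) M}
      = ENNReal.ofReal (∏ k ∈ Finset.Icc 1 n, (1 - q ^ k)) := by
  have hcard : (Finset.Icc (1:ℤ) (n:ℤ)).card = n := by
    rw [Int.card_Icc]; omega
  have hev : {ω | ∃ M : Finset (ℤ × ℤ),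
        IsStableBipMatching (fun i j => C (i, j) ω = true)
          (Finset.Icc 1 (n : ℤ)) (Finset.Icc 1 (n : ℤ)) M ∧
        IsPerfectBipMatching (Finset.Icc 1 (n : ℤ)) (Finset.Icc 1 (n : ℤ)) M}
      = {ω | Q (fun i j => C (i, j) ω = true) n (Finset.Icc 1 (n:ℤ))} := by
    ext ω
    exact exists_stable_perfect_iff (fun i j => C (i, j) ω = true) n (Finset.Icc 1 (n:ℤ))
  rw [hev]
  exact prob_Q μ p q hp0 hp1 hq C hmeas hind hBer n _ hcard
end

section
/- Let p ∈ (0,1], q = 1-p, and let G be the random bipartite graph on {1,…,n} × {1,…,n} with each edge present independently with probability p. Conditional on the unique stable matching σ of G being perfect, σ is distributed according to the Mallows measure on S_n with parameter q; that is, for every permutation τ of {1,…,n}, P(σ = τ | σ perfect) is proportional to q^{inv(τ)}. -/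
open MeasureTheory ProbabilityTheory

/-- The number of inversions of a permutation of `{1,…,n}` (represented as `Fin n`). -/
def invNum {n : ℕ} (τ : Equiv.Perm (Fin n)) : ℕ :=
  (Finset.univ.filter fun p : Fin n × Fin n => p.1 < p.2 ∧ τ p.2 < τ p.1).card

/-- The event that the permutation `τ` is a (perfect) stable matching of the random
bipartite compatibility graph encoded by `C`: every pair `(i, τ i)` is compatible, and
there is no compatible pair `(i, j)` in which male `i` prefers `j` to his partner `τ i`
and female `j` prefers `i` to her partner `τ⁻¹ j`. -/
def stablePermEvent {Ω : Type*} {n : ℕ} (C : Fin n × Fin n → Ω → Bool)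
    (τ : Equiv.Perm (Fin n)) : Set Ω :=
  {ω | (∀ i, C (i, τ i) ω = true) ∧
    ¬ ∃ i j, C (i, j) ω = true ∧ τ i < j ∧ τ.symm j < i}

/-- Auxiliary: which values of `C e` are required by the event `stablePermEvent C τ`. -/
def setFor {n : ℕ} (τ : Equiv.Perm (Fin n)) (e : Fin n × Fin n) : Set Bool :=
  if e.2 = τ e.1 then {true}
  else if τ e.1 < e.2 ∧ τ.symm e.2 < e.1 then {false}
  else Set.univ

lemma stable_eq_iInter {Ω : Type*} {n : ℕ} (C : Fin n × Fin n → Ω → Bool)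
    (τ : Equiv.Perm (Fin n)) :
    stablePermEvent C τ = ⋂ e, C e ⁻¹' setFor τ e := by
  ext ω
  simp only [stablePermEvent, Set.mem_setOf_eq, Set.mem_iInter, Set.mem_preimage, setFor]
  constructor
  · rintro ⟨h1, h2⟩ ⟨i, j⟩
    by_cases hm : j = τ i
    · subst hm; simpa using h1 i
    · simp only [hm, if_false]
      by_cases hb : τ i < j ∧ τ.symm j < i
      · simp only [hb, if_true, Set.mem_singleton_iff]
        cases hC : C (i, j) ω with
        | false => rfl
        | true => exact absurd ⟨i, j, hC, hb.1, hb.2⟩ h2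
      · simp [hb]
  · intro h
    refine ⟨fun i => ?_, ?_⟩
    · simpa using h (i, τ i)
    · rintro ⟨i, j, hC, hb1, hb2⟩
      have := h (i, j)
      have hm : ¬ (j = τ i) := fun hh => absurd hb1 (by simp [hh])
      simp [hm, hb1, hb2, hC] at this

lemma card_matched {n : ℕ} (τ : Equiv.Perm (Fin n)) :
    (Finset.univ.filter fun e : Fin n × Fin n => e.2 = τ e.1).card = n := by
  have h : (Finset.univ.filter fun e : Fin n × Fin n => e.2 = τ e.1).card
      = (Finset.univ : Finset (Fin n)).card := by
    apply Finset.card_bij (fun e _ => e.1)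
    · intros; exact Finset.mem_univ _
    · rintro ⟨i, j⟩ hij ⟨i', j'⟩ hij' hh
      simp only [Finset.mem_filter] at hij hij'
      simp only at hh
      subst hh
      exact Prod.ext rfl (hij.2.trans hij'.2.symm)
    · intro i _
      exact ⟨(i, τ i), Finset.mem_filter.2 ⟨Finset.mem_univ _, rfl⟩, rfl⟩
  rw [h, Finset.card_univ, Fintype.card_fin]

lemma card_block {n : ℕ} (τ : Equiv.Perm (Fin n)) :
    (Finset.univ.filter fun e : Fin n × Fin n =>
      ¬ e.2 = τ e.1 ∧ (τ e.1 < e.2 ∧ τ.symm e.2 < e.1)).card = invNum τ := by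
  unfold invNum
  apply Finset.card_bij (fun e _ => ((τ.symm e.2, e.1) : Fin n × Fin n))
  · rintro ⟨i, j⟩ he
    simp only [Finset.mem_filter, Finset.mem_univ, true_and] at he ⊢
    exact ⟨he.2.2, by simpa using he.2.1⟩
  · rintro ⟨i, j⟩ hij ⟨i', j'⟩ hij' h
    simp only [Prod.mk.injEq] at h
    obtain ⟨h1, h2⟩ := h
    subst h2
    exact Prod.ext rfl (τ.symm.injective h1)
  · rintro ⟨a, b⟩ hab
    simp only [Finset.mem_filter, Finset.mem_univ, true_and] at hab
    refine ⟨(b, τ a), Finset.mem_filter.2 ⟨Finset.mem_univ _, ?_, ?_, ?_⟩, ?_⟩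
    · simp only
      exact fun hh => hab.1.ne (τ.injective hh)
    · simpa using hab.2
    · simpa using hab.1
    · simp

lemma meas_stable {Ω : Type*} {n : ℕ} [MeasurableSpace Ω] (μ : Measure Ω)
    [IsProbabilityMeasure μ] (p : ℝ) (hp0 : 0 ≤ p)
    (C : Fin n × Fin n → Ω → Bool) (hmeas : ∀ e, Measurable (C e))
    (hind : iIndepFun C μ)
    (hBer : ∀ e, μ {ω | C e ω = true} = ENNReal.ofReal p)
    (τ : Equiv.Perm (Fin n)) :
    μ (stablePermEvent C τ)
      = ENNReal.ofReal p ^ n * ENNReal.ofReal (1 - p) ^ invNum τ := by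
  have hfac : ∀ e, μ (C e ⁻¹' setFor τ e) =
      if e.2 = τ e.1 then ENNReal.ofReal p
      else if τ e.1 < e.2 ∧ τ.symm e.2 < e.1 then ENNReal.ofReal (1 - p) else 1 := by
    intro e
    have htrue : C e ⁻¹' {true} = {ω | C e ω = true} := by ext ω; simp
    unfold setFor
    split_ifs with h1 h2
    · rw [htrue, hBer e]
    · have hfalse : C e ⁻¹' {false} = {ω | C e ω = true}ᶜ := by
        ext ω; cases h : C e ω <;> simp [h]
      rw [hfalse, measure_compl (by rw [← htrue]; exact hmeas e (MeasurableSet.of_discrete))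
        (measure_ne_top μ _), hBer e, measure_univ,
        ENNReal.ofReal_sub 1 hp0, ENNReal.ofReal_one]
    · rw [Set.preimage_univ, measure_univ]
  have hiInter : (⋂ e, C e ⁻¹' setFor τ e) = ⋂ e ∈ Finset.univ, C e ⁻¹' setFor τ e := by
    simp
  rw [stable_eq_iInter, hiInter,
    hind.measure_inter_preimage_eq_mul Finset.univ (fun i _ => MeasurableSet.of_discrete)]
  rw [Finset.prod_congr rfl (fun e _ => hfac e), Finset.prod_ite, Finset.prod_const,
    card_matched, Finset.prod_ite, Finset.prod_const, Finset.prod_const_one, mul_one,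
    Finset.filter_filter, card_block]

lemma stable_step {Ω : Type*} {n : ℕ} {C : Fin n × Fin n → Ω → Bool}
    {τ τ' : Equiv.Perm (Fin n)} {ω : Ω} (hω : ω ∈ stablePermEvent C τ)
    (hω' : ω ∈ stablePermEvent C τ') {i : Fin n} (hlt : τ i < τ' i) :
    ∃ i', i < i' ∧ τ i' ≠ τ' i' := by
  have hC : C (i, τ' i) ω = true := hω'.1 i
  have hns : ¬ τ.symm (τ' i) < i := fun hh => hω.2 ⟨i, τ' i, hC, hlt, hh⟩
  have hne : τ.symm (τ' i) ≠ i := by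
    intro hh
    have heq := congrArg τ hh
    rw [Equiv.apply_symm_apply] at heq
    rw [heq] at hlt
    exact lt_irrefl _ hlt
  refine ⟨τ.symm (τ' i), lt_of_le_of_ne (not_lt.1 hns) (Ne.symm hne), ?_⟩
  intro hcon
  apply hne
  apply τ'.injective
  rw [← hcon]; simp

lemma stable_disjoint {Ω : Type*} {n : ℕ} (C : Fin n × Fin n → Ω → Bool) :
    Pairwise (Function.onFun Disjoint
      fun τ' : Equiv.Perm (Fin n) => stablePermEvent C τ') := by
  intro τ τ' hne
  rw [Function.onFun, Set.disjoint_left]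
  intro ω hω hω'
  set S : Finset (Fin n) := Finset.univ.filter fun i => τ i ≠ τ' i with hS
  have hSne : S.Nonempty := by
    by_contra hemp
    rw [Finset.not_nonempty_iff_eq_empty] at hemp
    apply hne
    ext i
    by_contra hi
    have hi' : τ i ≠ τ' i := fun hh => hi (by rw [hh])
    have hmem : i ∈ S := Finset.mem_filter.2 ⟨Finset.mem_univ _, hi'⟩
    rw [hemp] at hmem
    exact absurd hmem (Finset.notMem_empty _)
  set i0 := S.max' hSne with hi0def
  have hi0 : τ i0 ≠ τ' i0 := (Finset.mem_filter.1 (S.max'_mem hSne)).2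
  rcases hi0.lt_or_gt with h | h
  · obtain ⟨i', hlt, hne'⟩ := stable_step hω hω' h
    exact absurd (S.le_max' i' (Finset.mem_filter.2 ⟨Finset.mem_univ _, hne'⟩))
      (not_le.2 hlt)
  · obtain ⟨i', hlt, hne'⟩ := stable_step hω' hω h
    exact absurd (S.le_max' i' (Finset.mem_filter.2 ⟨Finset.mem_univ _, Ne.symm hne'⟩))
      (not_le.2 hlt)

/-- Conditional on the unique stable matching of the random bipartite graph being perfect,
it is Mallows distributed: `P(σ = τ ∧ perfect) · ∑_{τ'} q^{inv τ'} = q^{inv τ} · P(perfect)`,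
i.e. `P(σ = τ | perfect)` is proportional to `q^{inv τ}`. -/
theorem stable_matching_conditioned_is_mallows
    {Ω : Type*} [MeasurableSpace Ω] (μ : Measure Ω) [IsProbabilityMeasure μ]
    (p q : ℝ) (hp0 : 0 < p) (hp1 : p ≤ 1) (hq : q = 1 - p) (n : ℕ)
    (C : Fin n × Fin n → Ω → Bool) (hmeas : ∀ e, Measurable (C e))
    (hind : iIndepFun C μ)
    (hBer : ∀ e, μ {ω | C e ω = true} = ENNReal.ofReal p)
    (τ : Equiv.Perm (Fin n)) :
    (μ (stablePermEvent C τ)).toReal * (∑ τ' : Equiv.Perm (Fin n), q ^ invNum τ')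
      = q ^ invNum τ * (μ {ω | ∃ τ' : Equiv.Perm (Fin n), ω ∈ stablePermEvent C τ'}).toReal := by
  have hq0 : 0 ≤ q := by rw [hq]; linarith
  have hkey : ∀ τ' : Equiv.Perm (Fin n), (μ (stablePermEvent C τ')).toReal
      = p ^ n * q ^ invNum τ' := by
    intro τ'
    rw [meas_stable μ p hp0.le C hmeas hind hBer τ', ← hq, ENNReal.toReal_mul,
      ENNReal.toReal_pow, ENNReal.toReal_pow, ENNReal.toReal_ofReal hp0.le,
      ENNReal.toReal_ofReal hq0]
  have hmeasS : ∀ τ' : Equiv.Perm (Fin n), MeasurableSet (stablePermEvent C τ') := by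
    intro τ'
    rw [stable_eq_iInter]
    exact MeasurableSet.iInter fun e => hmeas e (MeasurableSet.of_discrete)
  have hset : {ω | ∃ τ' : Equiv.Perm (Fin n), ω ∈ stablePermEvent C τ'}
      = ⋃ τ' : Equiv.Perm (Fin n), stablePermEvent C τ' := by
    ext ω; simp [Set.mem_iUnion]
  rw [hset, measure_iUnion (stable_disjoint C) hmeasS, tsum_fintype,
    ENNReal.toReal_sum (fun a _ => measure_ne_top μ _), hkey τ]
  simp_rw [hkey]
  rw [← Finset.mul_sum]
  ring
end

section
/- For any permutation τ of {1,…,n}, the unconditioned probability that the unique stable matching σ of the random bipartite graph G (each of the n² edges present independently with probability p = 1-q) equals τ is exactly q^{inv(τ)} (1-q)^n. -/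
open MeasureTheory ProbabilityTheory

/-- For any permutation `τ` of `{1,…,n}`, the probability that the unique stable matching
of the random bipartite graph (edges present independently with probability `p = 1 - q`)
equals `τ` is exactly `q^{inv τ} (1-q)^n`. -/
theorem prob_stable_matching_eq_perm
    {Ω : Type*} [MeasurableSpace Ω] (μ : Measure Ω) [IsProbabilityMeasure μ]
    (p q : ℝ) (hp0 : 0 < p) (hp1 : p ≤ 1) (hq : q = 1 - p) (n : ℕ)
    (C : Fin n × Fin n → Ω → Bool) (hmeas : ∀ e, Measurable (C e))
    (hind : iIndepFun C μ)
    (hBer : ∀ e, μ {ω | C e ω = true} = ENNReal.ofReal p)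
    (τ : Equiv.Perm (Fin n)) :
    μ (stablePermEvent C τ) = ENNReal.ofReal (q ^ invNum τ * (1 - q) ^ n) := by
  classical
  have hq0 : 0 ≤ q := by linarith
  set sets : Fin n × Fin n → Set Bool := fun e =>
    if e.2 = τ e.1 then {true}
    else if τ e.1 < e.2 ∧ τ.symm e.2 < e.1 then {false} else Set.univ with hsets
  -- Rewrite the event as an intersection of preimages
  have hEvent : stablePermEvent C τ
      = ⋂ e ∈ (Finset.univ : Finset (Fin n × Fin n)), C e ⁻¹' sets e := by
    ext ω
    simp only [stablePermEvent, Set.mem_setOf_eq, Set.mem_iInter, Set.mem_preimage,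
      Finset.mem_univ, Set.iInter_true]
    constructor
    · rintro ⟨h1, h2⟩ e
      by_cases hA : e.2 = τ e.1
      · have := h1 e.1
        simp only [hsets, hA, if_pos rfl, Set.mem_singleton_iff]
        rw [show (e.1, τ e.1) = e from by rw [← hA]] at this
        exact this
      · by_cases hB : τ e.1 < e.2 ∧ τ.symm e.2 < e.1
        · simp only [hsets, if_neg hA, if_pos hB, Set.mem_singleton_iff]
          by_contra hcon
          have : C e ω = true := by
            cases h : C e ω with
            | false => exact absurd h hcon
            | true => rfl
          exact h2 ⟨e.1, e.2, this, hB.1, hB.2⟩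
        · simp [hsets, if_neg hA, if_neg hB]
    · intro h
      constructor
      · intro i
        have := h (i, τ i)
        simpa [hsets] using this
      · rintro ⟨i, j, hC, hij1, hij2⟩
        have hA : ¬ (j = τ i) := by
          intro h'; rw [h'] at hij1; exact lt_irrefl _ hij1
        have hBc : τ i < j ∧ τ.symm j < i := ⟨hij1, hij2⟩
        have := h (i, j)
        simp only [hsets, if_neg hA, if_pos hBc, Set.mem_singleton_iff] at this
        rw [hC] at this
        exact Bool.true_eq_false.mp this
  -- independence gives the product formula
  have hprod : μ (stablePermEvent C τ)
      = ∏ e : Fin n × Fin n, μ (C e ⁻¹' sets e) := by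
    rw [hEvent]
    exact hind.measure_inter_preimage_eq_mul Finset.univ (fun i _ => by
      measurability)
  -- compute each factor
  have htrue : ∀ e, μ (C e ⁻¹' {true}) = ENNReal.ofReal p := by
    intro e
    have : C e ⁻¹' {true} = {ω | C e ω = true} := by ext ω; simp
    rw [this]; exact hBer e
  have hfalse : ∀ e, μ (C e ⁻¹' {false}) = ENNReal.ofReal q := by
    intro e
    have hcompl : C e ⁻¹' {false} = (C e ⁻¹' {true})ᶜ := by
      ext ω; cases h : C e ω <;> simp [h]
    rw [hcompl, measure_compl (hmeas e (measurableSet_singleton true)) (measure_ne_top _ _),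
      measure_univ, htrue, hq]
    rw [show (1 : ENNReal) = ENNReal.ofReal 1 from (ENNReal.ofReal_one).symm,
      ← ENNReal.ofReal_sub 1 hp0.le]
  have hval : ∀ e : Fin n × Fin n, μ (C e ⁻¹' sets e)
      = if e.2 = τ e.1 then ENNReal.ofReal p
        else if τ e.1 < e.2 ∧ τ.symm e.2 < e.1 then ENNReal.ofReal q else 1 := by
    intro e
    by_cases hA : e.2 = τ e.1
    · simp only [hsets, if_pos hA]; exact htrue e
    · by_cases hB : τ e.1 < e.2 ∧ τ.symm e.2 < e.1
      · simp only [hsets, if_neg hA, if_pos hB]; exact hfalse e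
      · simp only [hsets, if_neg hA, if_neg hB, Set.preimage_univ, measure_univ]
  -- the two relevant finsets and their cardinalities
  set A : Finset (Fin n × Fin n) := Finset.univ.filter (fun e => e.2 = τ e.1) with hAdef
  set B : Finset (Fin n × Fin n) :=
    Finset.univ.filter (fun e => τ e.1 < e.2 ∧ τ.symm e.2 < e.1) with hBdef
  have hcardA : A.card = n := by
    rw [hAdef]
    have : Finset.univ.filter (fun e : Fin n × Fin n => e.2 = τ e.1)
        = Finset.univ.image (fun i : Fin n => (i, τ i)) := by
      ext e
      simp only [Finset.mem_filter, Finset.mem_univ, true_and, Finset.mem_image]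
      constructor
      · intro h; exact ⟨e.1, by rw [← h]⟩
      · rintro ⟨i, rfl⟩; rfl
    rw [this, Finset.card_image_of_injective _ (fun a b h => (Prod.mk.injEq _ _ _ _ ▸ h : _ ∧ _).1),
      Finset.card_univ, Fintype.card_fin]
  have hcardB : B.card = invNum τ := by
    rw [hBdef, invNum]
    refine (Finset.card_nbij' (fun e => (τ.symm e.2, e.1)) (fun e => (e.2, τ e.1)) ?_ ?_ ?_ ?_)
    · rintro ⟨i, j⟩ h
      simp only [Finset.mem_filter, Finset.mem_univ, true_and] at h ⊢
      exact Finset.mem_filter.mpr ⟨Finset.mem_univ _, (Finset.mem_filter.mp h).2.2, by simpa using (Finset.mem_filter.mp h).2.1⟩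
    · rintro ⟨a, b⟩ h
      simp only [Finset.mem_filter, Finset.mem_univ, true_and] at h ⊢
      exact Finset.mem_filter.mpr ⟨Finset.mem_univ _, (Finset.mem_filter.mp h).2.2, by simpa using (Finset.mem_filter.mp h).2.1⟩
    · rintro ⟨i, j⟩ _; simp
    · rintro ⟨a, b⟩ _; simp
  -- disjointness and product computation
  have hdisj : Disjoint A B := by
    rw [Finset.disjoint_left]
    rintro ⟨i, j⟩ hA hB
    simp only [hAdef, hBdef, Finset.mem_filter, Finset.mem_univ, true_and] at hA hB
    rw [hA] at hB
    exact lt_irrefl _ hB.1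
  have hprodval : ∏ e : Fin n × Fin n, μ (C e ⁻¹' sets e)
      = (ENNReal.ofReal p) ^ n * (ENNReal.ofReal q) ^ invNum τ := by
    calc ∏ e : Fin n × Fin n, μ (C e ⁻¹' sets e)
        = ∏ e ∈ A ∪ B, μ (C e ⁻¹' sets e) := by
          refine (Finset.prod_subset (Finset.subset_univ _) (fun e _ he => ?_)).symm
          rw [hval e]
          simp only [hAdef, hBdef, Finset.mem_union, Finset.mem_filter, Finset.mem_univ,
            true_and, not_or] at he
          rw [if_neg he.1, if_neg he.2]
      _ = (∏ e ∈ A, μ (C e ⁻¹' sets e)) * ∏ e ∈ B, μ (C e ⁻¹' sets e) :=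
          Finset.prod_union hdisj
      _ = (ENNReal.ofReal p) ^ n * (ENNReal.ofReal q) ^ invNum τ := by
          have e1 : (∏ e ∈ A, μ (C e ⁻¹' sets e)) = (ENNReal.ofReal p) ^ n := by
            rw [Finset.prod_congr rfl (fun e he => ?_), Finset.prod_const, hcardA]
            rw [hval e]
            simp only [hAdef, Finset.mem_filter, Finset.mem_univ, true_and] at he
            rw [if_pos he]
          have e2 : (∏ e ∈ B, μ (C e ⁻¹' sets e)) = (ENNReal.ofReal q) ^ invNum τ := by
            rw [Finset.prod_congr rfl (fun e he => ?_), Finset.prod_const, hcardB]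
            rw [hval e]
            simp only [hBdef, Finset.mem_filter, Finset.mem_univ, true_and] at he
            have hA : ¬ (e.2 = τ e.1) := by
              intro h'; rw [h'] at he; exact lt_irrefl _ he.1
            rw [if_neg hA, if_pos he]
          rw [e1, e2]
  rw [hprod, hprodval]
  rw [← ENNReal.ofReal_pow hp0.le, ← ENNReal.ofReal_pow hq0, ← ENNReal.ofReal_mul (by positivity)]
  congr 1
  have : 1 - q = p := by linarith
  rw [this]; ring
end

section
/- Let p = 1-q ∈ (0,1] and consider the random bipartite graph in which, for each pair (a,b) ∈ ℤ × ℤ, the male a and female b are compatible independently with probability p. For any finite nonempty sets A, B, A', B' ⊆ ℤ with |A| = |B| and |A'| = |B'|, the probability that the unique stable matchings σ_{A,B} of the induced compatibility graph on A × {male} ∪ B × {female} and σ_{A',B'} of the induced graph on A' × {male} ∪ B' × {female} are both perfect is at least ∏_{k=1}^{|A|} (1 - q^k) · ∏_{k=1}^{|A'|} (1 - q^k). -/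
open MeasureTheory ProbabilityTheory

namespace StableCorrAux

open Finset
open scoped Classical

/-- the set of compatible partners of `a` in `B`, with a fixed decidability instance -/
noncomputable def filE (E : ℤ → ℤ → Prop) (a : ℤ) (B : Finset ℤ) : Finset ℤ :=
  B.filter fun b => E a b

lemma mem_filE {E : ℤ → ℤ → Prop} {a j : ℤ} {B : Finset ℤ} :
    j ∈ filE E a B ↔ j ∈ B ∧ E a j := Finset.mem_filter

lemma filE_congr {E E' : ℤ → ℤ → Prop} {a : ℤ} {B : Finset ℤ}
    (h : ∀ j ∈ B, (E a j ↔ E' a j)) : filE E a B = filE E' a B :=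
  Finset.filter_congr h

/-- greedy success predicate -/
def gOk (E : ℤ → ℤ → Prop) (A B : Finset ℤ) : Prop :=
  if h : A.Nonempty then
    if hb : (filE E (A.max' h) B).Nonempty then
      gOk E (A.erase (A.max' h))
        (B.erase ((filE E (A.max' h) B).max' hb))
    else False
  else True
termination_by A.card
decreasing_by exact Finset.card_erase_lt_of_mem (A.max'_mem h)

lemma gOk_empty (E : ℤ → ℤ → Prop) (B : Finset ℤ) : gOk E ∅ B := by
  rw [gOk]
  simp

lemma gOk_top (E : ℤ → ℤ → Prop) {A : Finset ℤ} {a : ℤ} (haA : a ∈ A)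
    (ha : ∀ i ∈ A, i ≤ a) (B : Finset ℤ) :
    gOk E A B ↔
      (if hb : (filE E a B).Nonempty then
        gOk E (A.erase a) (B.erase ((filE E a B).max' hb))
      else False) := by
  have hA : A.Nonempty := ⟨a, haA⟩
  have hmax : A.max' hA = a :=
    le_antisymm (A.max'_le hA a ha) (A.le_max' a haA)
  subst hmax
  rw [gOk, dif_pos hA]

/-- gOk only depends on E restricted to A × B -/
lemma gOk_congr (E E' : ℤ → ℤ → Prop) :
    ∀ (A B : Finset ℤ), (∀ i ∈ A, ∀ j ∈ B, (E i j ↔ E' i j)) →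
      (gOk E A B ↔ gOk E' A B) := by
  intro A
  induction A using Finset.strongInduction with
  | _ A ih =>
    intro B hEE
    by_cases hA : A.Nonempty
    · set a := A.max' hA with ha
      have haA : a ∈ A := A.max'_mem hA
      have hfil : filE E a B = filE E' a B :=
        filE_congr (fun j hj => hEE a haA j hj)
      rw [gOk_top E haA (fun i hi => A.le_max' i hi) B,
          gOk_top E' haA (fun i hi => A.le_max' i hi) B]
      by_cases hb : (filE E a B).Nonempty
      · have hb' : (filE E' a B).Nonempty := hfil ▸ hb
        rw [dif_pos hb, dif_pos hb']
        have hbb : (filE E a B).max' hb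
            = (filE E' a B).max' hb' := by
          congr 1
        rw [hbb]
        exact ih (A.erase a) (Finset.erase_ssubset haA) _
          (fun i hi j hj => hEE i (Finset.mem_of_mem_erase hi) j
            (Finset.mem_of_mem_erase hj))
      · have hb' : ¬ (filE E' a B).Nonempty := hfil ▸ hb
        rw [dif_neg hb, dif_neg hb']
    · rw [Finset.not_nonempty_iff_eq_empty] at hA
      subst hA
      simp [gOk_empty]
/-- If the greedy process succeeds, there is a stable perfect matching. -/
lemma gOk_stable (E : ℤ → ℤ → Prop) :
    ∀ (A B : Finset ℤ), A.card = B.card → gOk E A B →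
      ∃ M : Finset (ℤ × ℤ), IsStableBipMatching E A B M ∧ IsPerfectBipMatching A B M := by
  intro A
  induction A using Finset.strongInduction with
  | _ A ih =>
    intro B hcard hg
    by_cases hA : A.Nonempty
    · set a := A.max' hA with ha
      have haA : a ∈ A := A.max'_mem hA
      rw [gOk_top E haA (fun i hi => A.le_max' i hi) B] at hg
      by_cases hb : (filE E a B).Nonempty
      · rw [dif_pos hb] at hg
        set b := (filE E a B).max' hb with hbdef
        have hbmem : b ∈ filE E a B := Finset.max'_mem _ hb
        have hbB : b ∈ B := (mem_filE.mp hbmem).1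
        have hEab : E a b := (mem_filE.mp hbmem).2
        have hble : ∀ j ∈ B, E a j → j ≤ b := fun j hj hEj =>
          Finset.le_max' _ j (mem_filE.mpr ⟨hj, hEj⟩)
        have hcard' : (A.erase a).card = (B.erase b).card := by
          rw [Finset.card_erase_of_mem haA, Finset.card_erase_of_mem hbB, hcard]
        obtain ⟨M', ⟨⟨hM'edge, hM'inj1, hM'inj2⟩, hM'stab⟩, hM'perf⟩ :=
          ih (A.erase a) (Finset.erase_ssubset haA) (B.erase b) hcard' hg
        refine ⟨insert (a, b) M', ⟨⟨?_, ?_, ?_⟩, ?_⟩, ?_, ?_⟩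
        · intro e he
          rcases Finset.mem_insert.mp he with rfl | he'
          · exact ⟨haA, hbB, hEab⟩
          · obtain ⟨h1, h2, h3⟩ := hM'edge e he'
            exact ⟨Finset.mem_of_mem_erase h1, Finset.mem_of_mem_erase h2, h3⟩
        · intro e he f hf h1
          rcases Finset.mem_insert.mp he with rfl | he' <;>
            rcases Finset.mem_insert.mp hf with rfl | hf'
          · rfl
          · exact absurd (h1 ▸ (hM'edge f hf').1) (by simp)
          · exact absurd (h1 ▸ (hM'edge e he').1) (by simp [h1])
          · exact hM'inj1 e he' f hf' h1
        · intro e he f hf h2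
          rcases Finset.mem_insert.mp he with rfl | he' <;>
            rcases Finset.mem_insert.mp hf with rfl | hf'
          · rfl
          · exact absurd (h2 ▸ (hM'edge f hf').2.1) (by simp)
          · exact absurd (h2 ▸ (hM'edge e he').2.1) (by simp [h2])
          · exact hM'inj2 e he' f hf' h2
        · rintro ⟨i, hiA, j, hjB, hEij, hij1, hij2⟩
          by_cases hia : i = a
          · subst hia
            have hblt : b < j := hij1 b (Finset.mem_insert_self _ _)
            exact absurd (hble j hjB hEij) (not_le.mpr hblt)
          · by_cases hjb : j = b
            · subst hjb
              have halt : a < i := hij2 a (Finset.mem_insert_self _ _)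
              exact absurd (A.le_max' i hiA) (not_le.mpr halt)
            · exact hM'stab ⟨i, Finset.mem_erase.mpr ⟨hia, hiA⟩, j,
                Finset.mem_erase.mpr ⟨hjb, hjB⟩, hEij,
                fun j' hj' => hij1 j' (Finset.mem_insert_of_mem hj'),
                fun i' hi' => hij2 i' (Finset.mem_insert_of_mem hi')⟩
        · intro i hiA
          by_cases hia : i = a
          · exact ⟨b, hia ▸ Finset.mem_insert_self _ _⟩
          · obtain ⟨j, hj⟩ := hM'perf.1 i (Finset.mem_erase.mpr ⟨hia, hiA⟩)
            exact ⟨j, Finset.mem_insert_of_mem hj⟩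
        · intro j hjB
          by_cases hjb : j = b
          · exact ⟨a, hjb ▸ Finset.mem_insert_self _ _⟩
          · obtain ⟨i, hi⟩ := hM'perf.2 j (Finset.mem_erase.mpr ⟨hjb, hjB⟩)
            exact ⟨i, Finset.mem_insert_of_mem hi⟩
      · rw [dif_neg hb] at hg
        exact hg.elim
    · rw [Finset.not_nonempty_iff_eq_empty] at hA
      subst hA
      have hB : B = ∅ := by
        have := hcard.symm
        simpa [Finset.card_eq_zero] using this
      subst hB
      refine ⟨∅, ⟨⟨?_, ?_, ?_⟩, ?_⟩, ?_, ?_⟩ <;> simp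

section SumAlgebra

variable {α : Type*} [DecidableEq α]


lemma inter_union_sdiff' {α : Type*} [DecidableEq α] (x R : Finset α) : x ∩ R ∪ x \ R = x := by
  ext e; simp only [Finset.mem_union, Finset.mem_inter, Finset.mem_sdiff]; tauto

/-- weight of configuration `x` over index set `T` -/
noncomputable def wgt (p q : ℝ) (T x : Finset α) : ℝ := ∏ e ∈ T, (if e ∈ x then p else q)

lemma wgt_nonneg {p q : ℝ} (hp : 0 ≤ p) (hq : 0 ≤ q) (T x : Finset α) :
    0 ≤ wgt p q T x :=
  Finset.prod_nonneg fun e _ => by by_cases h : e ∈ x <;> simp [wgt, h, hp, hq]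

lemma wgt_eq {p q : ℝ} {y R : Finset α} (hy : y ⊆ R) :
    wgt p q R y = (∏ _e ∈ y, p) * ∏ _e ∈ R \ y, q := by
  have hdis : Disjoint y (R \ y) := Finset.disjoint_sdiff
  calc ∏ e ∈ R, (if e ∈ y then p else q)
      = ∏ e ∈ y ∪ R \ y, (if e ∈ y then p else q) := by
        rw [Finset.union_sdiff_of_subset hy]
    _ = (∏ e ∈ y, if e ∈ y then p else q) * ∏ e ∈ R \ y, (if e ∈ y then p else q) :=
        Finset.prod_union hdis
    _ = (∏ _e ∈ y, p) * ∏ _e ∈ R \ y, q := by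
        congr 1
        · exact Finset.prod_congr rfl fun e he => if_pos he
        · exact Finset.prod_congr rfl fun e he => if_neg (Finset.mem_sdiff.mp he).2

lemma sum_wgt {p q : ℝ} (hpq : p + q = 1) (R : Finset α) :
    ∑ y ∈ R.powerset, wgt p q R y = 1 := by
  calc ∑ y ∈ R.powerset, wgt p q R y
      = ∑ y ∈ R.powerset, (∏ _e ∈ y, p) * ∏ _e ∈ R \ y, q :=
        Finset.sum_congr rfl fun y hy => wgt_eq (Finset.mem_powerset.mp hy)
    _ = ∏ _e ∈ R, (p + q) := (Finset.prod_add _ _ R).symm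
    _ = 1 := by rw [hpq]; exact Finset.prod_const_one

lemma wgt_split {p q : ℝ} {R₀ R y : Finset α} (hR0 : R₀ ⊆ R) (hy : y ⊆ R \ R₀) :
    wgt p q R y = q ^ R₀.card * wgt p q (R \ R₀) y := by
  have hdis : Disjoint R₀ (R \ R₀) := Finset.disjoint_sdiff
  calc wgt p q R y
      = ∏ e ∈ R₀ ∪ R \ R₀, (if e ∈ y then p else q) := by
        rw [wgt, Finset.union_sdiff_of_subset hR0]
    _ = (∏ e ∈ R₀, if e ∈ y then p else q) * wgt p q (R \ R₀) y := Finset.prod_union hdis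
    _ = q ^ R₀.card * wgt p q (R \ R₀) y := by
        congr 1
        rw [Finset.prod_congr rfl (fun e he => if_neg fun hey =>
          (Finset.mem_sdiff.mp (hy hey)).2 he), Finset.prod_const]

lemma sum_wgt_inter_empty {p q : ℝ} (hpq : p + q = 1) {R₀ R : Finset α} (hR0 : R₀ ⊆ R) :
    ∑ y ∈ R.powerset.filter (fun y => y ∩ R₀ = ∅), wgt p q R y = q ^ R₀.card := by
  have hset : R.powerset.filter (fun y => y ∩ R₀ = ∅) = (R \ R₀).powerset := by
    ext y
    simp only [Finset.mem_filter, Finset.mem_powerset, Finset.subset_sdiff,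
      ← Finset.disjoint_iff_inter_eq_empty]
  rw [hset, Finset.sum_congr rfl (fun y hy => wgt_split hR0 (Finset.mem_powerset.mp hy)),
    ← Finset.mul_sum, sum_wgt hpq, mul_one]

lemma sum_powerset_split (R T : Finset α) (hR : R ⊆ T) (F : Finset α → ℝ) :
    ∑ x ∈ T.powerset, F x = ∑ y ∈ R.powerset, ∑ z ∈ (T \ R).powerset, F (y ∪ z) := by
  rw [← Finset.sum_product']
  refine Finset.sum_nbij' (fun x => (x ∩ R, x \ R)) (fun yz => yz.1 ∪ yz.2) ?_ ?_ ?_ ?_ ?_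
  · intro x hx
    rw [Finset.mem_powerset] at hx
    rw [Finset.mem_product, Finset.mem_powerset, Finset.mem_powerset]
    exact ⟨Finset.inter_subset_right, fun e he =>
      Finset.mem_sdiff.mpr ⟨hx (Finset.mem_sdiff.mp he).1, (Finset.mem_sdiff.mp he).2⟩⟩
  · intro yz hyz
    rw [Finset.mem_product, Finset.mem_powerset, Finset.mem_powerset] at hyz
    rw [Finset.mem_powerset]
    exact Finset.union_subset (hyz.1.trans hR) (hyz.2.trans (Finset.sdiff_subset))
  · intro x _
    exact inter_union_sdiff' x R
  · rintro ⟨y, z⟩ hyz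
    rw [Finset.mem_product, Finset.mem_powerset, Finset.mem_powerset] at hyz
    obtain ⟨hy, hz⟩ := hyz
    have h1 : (y ∪ z) ∩ R = y := by
      ext e
      simp only [Finset.mem_inter, Finset.mem_union]
      constructor
      · rintro ⟨h | h, hR'⟩
        · exact h
        · exact absurd hR' (Finset.mem_sdiff.mp (hz h)).2
      · exact fun h => ⟨Or.inl h, hy h⟩
    have h2 : (y ∪ z) \ R = z := by
      ext e
      simp only [Finset.mem_sdiff, Finset.mem_union]
      constructor
      · rintro ⟨h | h, hR'⟩
        · exact absurd (hy h) hR'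
        · exact h
      · exact fun h => ⟨Or.inr h, (Finset.mem_sdiff.mp (hz h)).2⟩
    simp [h1, h2]
  · intro x _
    rw [inter_union_sdiff']

end SumAlgebra

section GoodSum

variable {α : Type*} [DecidableEq α]

lemma sum_wgt_nonempty_inter {p q : ℝ} (hp : 0 ≤ p) (hq0 : 0 ≤ q) (hpq : p + q = 1)
    {R₁ R : Finset α} (h1 : R₁ ⊆ R) :
    ∑ y ∈ R.powerset.filter (fun y => (y ∩ R₁).Nonempty), wgt p q R y = 1 - q ^ R₁.card := by
  have htot := Finset.sum_filter_add_sum_filter_not R.powerset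
    (fun y => (y ∩ R₁).Nonempty) (wgt p q R)
  rw [sum_wgt hpq] at htot
  have hnot : R.powerset.filter (fun y => ¬ (y ∩ R₁).Nonempty)
      = R.powerset.filter (fun y => y ∩ R₁ = ∅) := by
    apply Finset.filter_congr
    intro y _
    simp [Finset.not_nonempty_iff_eq_empty]
  rw [hnot, sum_wgt_inter_empty hpq h1] at htot
  linarith

lemma sum_wgt_good {p q : ℝ} (hp : 0 ≤ p) (hq0 : 0 ≤ q) (hq1 : q ≤ 1) (hpq : p + q = 1)
    (R R₁ R₂ : Finset α) (h1 : R₁ ⊆ R) (h2 : R₂ ⊆ R) (c₁ c₂ : Prop) :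
    (if c₁ then 1 - q ^ R₁.card else 1) * (if c₂ then 1 - q ^ R₂.card else 1)
      ≤ ∑ y ∈ R.powerset.filter
          (fun y => (c₁ → (y ∩ R₁).Nonempty) ∧ (c₂ → (y ∩ R₂).Nonempty)), wgt p q R y := by
  by_cases hc1 : c₁ <;> by_cases hc2 : c₂
  · -- both constraints active
    rw [if_pos hc1, if_pos hc2]
    have hpred : R.powerset.filter
          (fun y => (c₁ → (y ∩ R₁).Nonempty) ∧ (c₂ → (y ∩ R₂).Nonempty))
        = R.powerset.filter (fun y => (y ∩ R₁).Nonempty ∧ (y ∩ R₂).Nonempty) := by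
      apply Finset.filter_congr; intro y _; simp [hc1, hc2]
    rw [hpred]
    have htot := Finset.sum_filter_add_sum_filter_not R.powerset
      (fun y => (y ∩ R₁).Nonempty ∧ (y ∩ R₂).Nonempty) (wgt p q R)
    rw [sum_wgt hpq] at htot
    -- compute the bad sum
    have hbadpred : R.powerset.filter (fun y => ¬ ((y ∩ R₁).Nonempty ∧ (y ∩ R₂).Nonempty))
        = R.powerset.filter (fun y => y ∩ R₁ = ∅ ∨ y ∩ R₂ = ∅) := by
      apply Finset.filter_congr; intro y _
      rw [not_and_or]
      simp [Finset.not_nonempty_iff_eq_empty]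
    have hor : R.powerset.filter (fun y => y ∩ R₁ = ∅ ∨ y ∩ R₂ = ∅)
        = R.powerset.filter (fun y => y ∩ R₁ = ∅) ∪ R.powerset.filter (fun y => y ∩ R₂ = ∅) :=
      Finset.filter_or _ _ _
    have hand : R.powerset.filter (fun y => y ∩ R₁ = ∅) ∩ R.powerset.filter (fun y => y ∩ R₂ = ∅)
        = R.powerset.filter (fun y => y ∩ (R₁ ∪ R₂) = ∅) := by
      rw [← Finset.filter_and]
      apply Finset.filter_congr; intro y _
      rw [Finset.inter_union_distrib_left, Finset.union_eq_empty]
    have hui := Finset.sum_union_inter (s₁ := R.powerset.filter (fun y => y ∩ R₁ = ∅))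
      (s₂ := R.powerset.filter (fun y => y ∩ R₂ = ∅)) (f := wgt p q R)
    rw [hand, sum_wgt_inter_empty hpq h1, sum_wgt_inter_empty hpq h2,
      sum_wgt_inter_empty hpq (Finset.union_subset h1 h2)] at hui
    rw [hbadpred, hor] at htot
    have hpow : q ^ (R₁.card + R₂.card) ≤ q ^ ((R₁ ∪ R₂).card) :=
      pow_le_pow_of_le_one hq0 hq1 (Finset.card_union_le _ _)
    rw [pow_add] at hpow
    nlinarith [hpow, htot, hui]
  · rw [if_pos hc1, if_neg hc2]
    have hpred : R.powerset.filter
          (fun y => (c₁ → (y ∩ R₁).Nonempty) ∧ (c₂ → (y ∩ R₂).Nonempty))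
        = R.powerset.filter (fun y => (y ∩ R₁).Nonempty) := by
      apply Finset.filter_congr; intro y _; simp [hc1, hc2]
    rw [hpred, sum_wgt_nonempty_inter hp hq0 hpq h1, mul_one]
  · rw [if_neg hc1, if_pos hc2]
    have hpred : R.powerset.filter
          (fun y => (c₁ → (y ∩ R₁).Nonempty) ∧ (c₂ → (y ∩ R₂).Nonempty))
        = R.powerset.filter (fun y => (y ∩ R₂).Nonempty) := by
      apply Finset.filter_congr; intro y _; simp [hc1, hc2]
    rw [hpred, sum_wgt_nonempty_inter hp hq0 hpq h2, one_mul]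
  · rw [if_neg hc1, if_neg hc2]
    have hpred : R.powerset.filter
          (fun y => (c₁ → (y ∩ R₁).Nonempty) ∧ (c₂ → (y ∩ R₂).Nonempty))
        = R.powerset := by
      rw [Finset.filter_true_of_mem]
      intro y _; exact ⟨fun h => absurd h hc1, fun h => absurd h hc2⟩
    rw [hpred, sum_wgt hpq, one_mul]

end GoodSum

section Decode

lemma wgt_union_split {α : Type*} [DecidableEq α] {p q : ℝ} {R T y z : Finset α}
    (hRT : R ⊆ T) (hy : y ⊆ R) (hz : z ⊆ T \ R) :
    wgt p q T (y ∪ z) = wgt p q R y * wgt p q (T \ R) z := by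
  have hdis : Disjoint R (T \ R) := Finset.disjoint_sdiff
  calc wgt p q T (y ∪ z)
      = ∏ e ∈ R ∪ T \ R, (if e ∈ y ∪ z then p else q) := by
        rw [wgt, Finset.union_sdiff_of_subset hRT]
    _ = (∏ e ∈ R, if e ∈ y ∪ z then p else q) *
          ∏ e ∈ T \ R, (if e ∈ y ∪ z then p else q) := Finset.prod_union hdis
    _ = wgt p q R y * wgt p q (T \ R) z := by
        congr 1
        · refine Finset.prod_congr rfl fun e he => ?_
          by_cases hey : e ∈ y
          · rw [if_pos (Finset.mem_union_left _ hey), if_pos hey]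
          · rw [if_neg hey, if_neg (fun hc => ?_)]
            rcases Finset.mem_union.mp hc with h | h
            · exact hey h
            · exact (Finset.mem_sdiff.mp (hz h)).2 he
        · refine Finset.prod_congr rfl fun e he => ?_
          by_cases hez : e ∈ z
          · rw [if_pos (Finset.mem_union_right _ hez), if_pos hez]
          · rw [if_neg hez, if_neg (fun hc => ?_)]
            rcases Finset.mem_union.mp hc with h | h
            · exact (Finset.mem_sdiff.mp he).2 (hy h)
            · exact hez h

/-- decoding one step of the greedy process after splitting off the top row -/
lemma decode_aux (a : ℤ) (A B : Finset ℤ) (haB : ∀ i ∈ A, i ≤ a) (y z : Finset (ℤ × ℤ))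
    (hyz1 : ∀ j ∈ B, ((a, j) ∈ y ∪ z ↔ (a, j) ∈ y))
    (hyz2 : ∀ i, i ≠ a → ∀ j, ((i, j) ∈ y ∪ z ↔ (i, j) ∈ z)) :
    gOk (fun i j => (i, j) ∈ y ∪ z) A B ↔
      ((a ∈ A → (filE (fun i j => (i, j) ∈ y) a B).Nonempty) ∧
        gOk (fun i j => (i, j) ∈ z) (A.erase a)
          (if a ∈ A then
            (if hb : (filE (fun i j => (i, j) ∈ y) a B).Nonempty
             then B.erase ((filE (fun i j => (i, j) ∈ y) a B).max' hb) else (∅ : Finset ℤ))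
           else B)) := by
  by_cases haA : a ∈ A
  · rw [gOk_top (fun i j => (i, j) ∈ y ∪ z) haA haB B]
    have hfil : filE (fun i j => (i, j) ∈ y ∪ z) a B = filE (fun i j => (i, j) ∈ y) a B :=
      filE_congr fun j hj => hyz1 j hj
    have key : ∀ (s t : Finset ℤ), s = t →
        ((if h : s.Nonempty then
            gOk (fun i j => (i, j) ∈ y ∪ z) (A.erase a) (B.erase (s.max' h))
          else False) ↔
         (if h : t.Nonempty then
            gOk (fun i j => (i, j) ∈ y ∪ z) (A.erase a) (B.erase (t.max' h))
          else False)) := by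
      rintro s t rfl; exact Iff.rfl
    rw [key _ _ hfil, if_pos haA]
    by_cases hb : (filE (fun i j => (i, j) ∈ y) a B).Nonempty
    · rw [dif_pos hb, dif_pos hb]
      set b := (filE (fun i j => (i, j) ∈ y) a B).max' hb with hbdef
      have hcongr := gOk_congr (fun i j => (i, j) ∈ y ∪ z) (fun i j => (i, j) ∈ z)
        (A.erase a) (B.erase b)
        (fun i hi j _ => hyz2 i (Finset.mem_erase.mp hi).1 j)
      rw [hcongr]
      exact ⟨fun h => ⟨fun _ => hb, h⟩, fun h => h.2⟩
    · rw [dif_neg hb, dif_neg hb]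
      exact ⟨False.elim, fun h => absurd (h.1 haA) hb⟩
  · rw [if_neg haA, Finset.erase_eq_of_notMem haA]
    have hcongr := gOk_congr (fun i j => (i, j) ∈ y ∪ z) (fun i j => (i, j) ∈ z) A B
      (fun i hi j _ => hyz2 i (fun h => haA (h ▸ hi)) j)
    rw [hcongr]
    exact ⟨fun h => ⟨fun h' => absurd h' haA, h⟩, fun h => h.2⟩

end Decode

section Core

/-- the next female set after the top male `a` picks (junk value if he fails) -/
noncomputable def nextB (a : ℤ) (A B : Finset ℤ) (y : Finset (ℤ × ℤ)) : Finset ℤ :=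
  if a ∈ A then
    (if hb : (filE (fun i j => (i, j) ∈ y) a B).Nonempty
     then B.erase ((filE (fun i j => (i, j) ∈ y) a B).max' hb) else (∅ : Finset ℤ))
  else B

lemma nextB_subset {a : ℤ} {A B : Finset ℤ} {y : Finset (ℤ × ℤ)} :
    nextB a A B y ⊆ B := by
  unfold nextB
  split_ifs
  exacts [Finset.erase_subset _ _, Finset.empty_subset _, subset_rfl]

lemma nextB_card_of_good {a : ℤ} {A B : Finset ℤ} {y : Finset (ℤ × ℤ)}
    (h : a ∈ A → (filE (fun i j => (i, j) ∈ y) a B).Nonempty) (hAB : A.card = B.card) :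
    (A.erase a).card = (nextB a A B y).card := by
  by_cases haA : a ∈ A
  · have hb := h haA
    have hbB : (filE (fun i j => (i, j) ∈ y) a B).max' hb ∈ B :=
      (mem_filE.mp (Finset.max'_mem _ hb)).1
    rw [Finset.card_erase_of_mem haA, nextB, if_pos haA, dif_pos hb,
      Finset.card_erase_of_mem hbB, hAB]
  · rw [Finset.erase_eq_of_notMem haA, nextB, if_neg haA]
    exact hAB

lemma prod_Icc_split {q : ℝ} {m : ℕ} (hm : 0 < m) :
    ∏ k ∈ Finset.Icc 1 m, (1 - q ^ k)
      = (∏ k ∈ Finset.Icc 1 (m - 1), (1 - q ^ k)) * (1 - q ^ m) := by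
  obtain ⟨m', rfl⟩ : ∃ m', m = m' + 1 := ⟨m - 1, by omega⟩
  rw [Finset.prod_Icc_succ_top (by omega : 1 ≤ m' + 1)]
  simp

lemma prods_nonneg {q : ℝ} (hq0 : 0 ≤ q) (hq1 : q ≤ 1) (m : ℕ) :
    0 ≤ ∏ k ∈ Finset.Icc 1 m, (1 - q ^ k) :=
  Finset.prod_nonneg fun k _ => by
    have : q ^ k ≤ 1 := pow_le_one₀ hq0 hq1
    linarith

set_option maxHeartbeats 2000000 in
lemma core (p q : ℝ) (hp : 0 ≤ p) (hq0 : 0 ≤ q) (hq1 : q ≤ 1) (hpq : p + q = 1) :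
    ∀ n : ℕ, ∀ A B A' B' : Finset ℤ, A.card + A'.card = n →
      A.card = B.card → A'.card = B'.card →
      ∀ T : Finset (ℤ × ℤ), (A ∪ A') ×ˢ (B ∪ B') ⊆ T →
      (∏ k ∈ Finset.Icc 1 A.card, (1 - q ^ k)) * (∏ k ∈ Finset.Icc 1 A'.card, (1 - q ^ k))
        ≤ ∑ x ∈ T.powerset.filter (fun x =>
            gOk (fun i j => (i, j) ∈ x) A B ∧ gOk (fun i j => (i, j) ∈ x) A' B'),
            wgt p q T x := by
  intro n
  induction n using Nat.strong_induction_on with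
  | _ n ih =>
  intro A B A' B' hn hAB hAB' T hT
  by_cases hAA' : (A ∪ A').Nonempty
  case neg =>
    rw [Finset.not_nonempty_iff_eq_empty, Finset.union_eq_empty] at hAA'
    obtain ⟨hA0, hA'0⟩ := hAA'
    subst hA0; subst hA'0
    rw [Finset.filter_true_of_mem (fun x _ => ⟨gOk_empty _ _, gOk_empty _ _⟩), sum_wgt hpq]
    simp
  case pos =>
  set a := (A ∪ A').max' hAA' with hadef
  have haU : a ∈ A ∪ A' := Finset.max'_mem _ _
  have hle : ∀ i ∈ A ∪ A', i ≤ a := fun i hi => Finset.le_max' _ i hi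
  set R : Finset (ℤ × ℤ) := {a} ×ˢ (B ∪ B') with hRdef
  have hRT : R ⊆ T := by
    intro e he
    rw [hRdef, Finset.mem_product, Finset.mem_singleton] at he
    exact hT (Finset.mem_product.mpr ⟨he.1 ▸ haU, he.2⟩)
  have hyz1 : ∀ y ∈ R.powerset, ∀ z ∈ (T \ R).powerset, ∀ j, j ∈ B ∪ B' →
      ((a, j) ∈ y ∪ z ↔ (a, j) ∈ y) := by
    intro y _ z hz j hj
    constructor
    · intro h
      rcases Finset.mem_union.mp h with h | h
      · exact h
      · exact absurd
          (by rw [hRdef, Finset.mem_product, Finset.mem_singleton]; exact ⟨rfl, hj⟩)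
          (Finset.mem_sdiff.mp ((Finset.mem_powerset.mp hz) h)).2
    · exact Finset.mem_union_left _
  have hyz2 : ∀ y ∈ R.powerset, ∀ z ∈ (T \ R).powerset, ∀ i, i ≠ a → ∀ j,
      ((i, j) ∈ y ∪ z ↔ (i, j) ∈ z) := by
    intro y hy z _ i hi j
    constructor
    · intro h
      rcases Finset.mem_union.mp h with h | h
      · refine absurd ?_ hi
        have := (Finset.mem_powerset.mp hy) h
        rw [hRdef, Finset.mem_product, Finset.mem_singleton] at this
        exact this.1
      · exact h
    · exact Finset.mem_union_right _
  have hdec : ∀ y ∈ R.powerset, ∀ z ∈ (T \ R).powerset,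
      ((gOk (fun i j => (i, j) ∈ y ∪ z) A B ∧ gOk (fun i j => (i, j) ∈ y ∪ z) A' B') ↔
        (((a ∈ A → (filE (fun i j => (i, j) ∈ y) a B).Nonempty) ∧
          (a ∈ A' → (filE (fun i j => (i, j) ∈ y) a B').Nonempty)) ∧
         (gOk (fun i j => (i, j) ∈ z) (A.erase a) (nextB a A B y) ∧
          gOk (fun i j => (i, j) ∈ z) (A'.erase a) (nextB a A' B' y)))) := by
    intro y hy z hz
    have h1 := decode_aux a A B (fun i hi => hle i (Finset.mem_union_left _ hi)) y z
      (fun j hj => hyz1 y hy z hz j (Finset.mem_union_left _ hj)) (hyz2 y hy z hz)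
    have h2 := decode_aux a A' B' (fun i hi => hle i (Finset.mem_union_right _ hi)) y z
      (fun j hj => hyz1 y hy z hz j (Finset.mem_union_right _ hj)) (hyz2 y hy z hz)
    simp only [nextB]
    rw [h1, h2]
    tauto
  have hiffB : ∀ (B₀ : Finset ℤ) (y : Finset (ℤ × ℤ)),
      ((y ∩ ({a} ×ˢ B₀)).Nonempty ↔ (filE (fun i j => (i, j) ∈ y) a B₀).Nonempty) := by
    intro B₀ y
    constructor
    · rintro ⟨e, he⟩
      rw [Finset.mem_inter, Finset.mem_product, Finset.mem_singleton] at he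
      exact ⟨e.2, mem_filE.mpr ⟨he.2.2, by rw [← he.2.1, Prod.mk.eta]; exact he.1⟩⟩
    · rintro ⟨j, hj⟩
      rw [mem_filE] at hj
      exact ⟨(a, j), Finset.mem_inter.mpr ⟨hj.2,
        Finset.mem_product.mpr ⟨Finset.mem_singleton_self a, hj.1⟩⟩⟩
  set c₁ : ℝ := ∏ k ∈ Finset.Icc 1 (A.erase a).card, (1 - q ^ k) with hc₁def
  set c₂ : ℝ := ∏ k ∈ Finset.Icc 1 (A'.erase a).card, (1 - q ^ k) with hc₂def
  have hc₁0 : 0 ≤ c₁ := prods_nonneg hq0 hq1 _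
  have hc₂0 : 0 ≤ c₂ := prods_nonneg hq0 hq1 _
  have hT1 : ∏ k ∈ Finset.Icc 1 A.card, (1 - q ^ k)
      = (if a ∈ A then 1 - q ^ (({a} ×ˢ B).card) else 1) * c₁ := by
    by_cases haA : a ∈ A
    · rw [if_pos haA]
      have hcB : ({a} ×ˢ B).card = B.card := by
        rw [Finset.card_product, Finset.card_singleton, one_mul]
      have hm : 0 < A.card := Finset.card_pos.mpr ⟨a, haA⟩
      rw [hcB, ← hAB, prod_Icc_split hm, hc₁def, Finset.card_erase_of_mem haA]
      ring
    · rw [if_neg haA, hc₁def, Finset.erase_eq_of_notMem haA, one_mul]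
  have hT2 : ∏ k ∈ Finset.Icc 1 A'.card, (1 - q ^ k)
      = (if a ∈ A' then 1 - q ^ (({a} ×ˢ B').card) else 1) * c₂ := by
    by_cases haA : a ∈ A'
    · rw [if_pos haA]
      have hcB : ({a} ×ˢ B').card = B'.card := by
        rw [Finset.card_product, Finset.card_singleton, one_mul]
      have hm : 0 < A'.card := Finset.card_pos.mpr ⟨a, haA⟩
      rw [hcB, ← hAB', prod_Icc_split hm, hc₂def, Finset.card_erase_of_mem haA]
      ring
    · rw [if_neg haA, hc₂def, Finset.erase_eq_of_notMem haA, one_mul]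
  have hgood_sum : (if a ∈ A then 1 - q ^ (({a} ×ˢ B).card) else 1) *
        (if a ∈ A' then 1 - q ^ (({a} ×ˢ B').card) else 1)
      ≤ ∑ y ∈ R.powerset.filter (fun y => (a ∈ A → (y ∩ ({a} ×ˢ B)).Nonempty) ∧ (a ∈ A' → (y ∩ ({a} ×ˢ B')).Nonempty)), wgt p q R y := by
    have h := sum_wgt_good hp hq0 hq1 hpq R ({a} ×ˢ B) ({a} ×ˢ B')
      (Finset.product_subset_product subset_rfl Finset.subset_union_left)
      (Finset.product_subset_product subset_rfl Finset.subset_union_right) (a ∈ A) (a ∈ A')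
    by_cases h1 : a ∈ A <;> by_cases h2 : a ∈ A' <;>
      simp only [h1, h2, if_true, if_false, eq_self_iff_true] at h ⊢ <;> exact h
  have hinner : ∀ y ∈ R.powerset,
      (if (a ∈ A → (y ∩ ({a} ×ˢ B)).Nonempty) ∧ (a ∈ A' → (y ∩ ({a} ×ˢ B')).Nonempty)
       then wgt p q R y * (c₁ * c₂) else 0)
        ≤ ∑ z ∈ (T \ R).powerset,
            (if gOk (fun i j => (i, j) ∈ y ∪ z) A B ∧ gOk (fun i j => (i, j) ∈ y ∪ z) A' B'
             then wgt p q T (y ∪ z) else 0) := by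
    intro y hy
    by_cases hgood : (a ∈ A → (y ∩ ({a} ×ˢ B)).Nonempty) ∧ (a ∈ A' → (y ∩ ({a} ×ˢ B')).Nonempty)
    · rw [if_pos hgood]
      have hgoodf : (a ∈ A → (filE (fun i j => (i, j) ∈ y) a B).Nonempty) ∧
          (a ∈ A' → (filE (fun i j => (i, j) ∈ y) a B').Nonempty) :=
        ⟨fun h => (hiffB B y).mp (hgood.1 h), fun h => (hiffB B' y).mp (hgood.2 h)⟩
      have hterm : ∀ z ∈ (T \ R).powerset,
          (if gOk (fun i j => (i, j) ∈ y ∪ z) A B ∧ gOk (fun i j => (i, j) ∈ y ∪ z) A' B'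
           then wgt p q T (y ∪ z) else 0)
          = wgt p q R y * (if gOk (fun i j => (i, j) ∈ z) (A.erase a) (nextB a A B y) ∧
              gOk (fun i j => (i, j) ∈ z) (A'.erase a) (nextB a A' B' y)
            then wgt p q (T \ R) z else 0) := by
        intro z hz
        rw [if_congr (hdec y hy z hz) rfl rfl]
        by_cases hPz : gOk (fun i j => (i, j) ∈ z) (A.erase a) (nextB a A B y) ∧
            gOk (fun i j => (i, j) ∈ z) (A'.erase a) (nextB a A' B' y)
        · rw [if_pos ⟨hgoodf, hPz⟩, if_pos hPz,
            wgt_union_split hRT (Finset.mem_powerset.mp hy) (Finset.mem_powerset.mp hz)]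
        · rw [if_neg (fun hc => hPz hc.2), if_neg hPz, mul_zero]
      rw [Finset.sum_congr rfl hterm, ← Finset.mul_sum]
      refine mul_le_mul_of_nonneg_left ?_ (wgt_nonneg hp hq0 _ _)
      rw [← Finset.sum_filter]
      have hlt : (A.erase a).card + (A'.erase a).card < n := by
        rcases Finset.mem_union.mp haU with h | h
        · have h1 : (A.erase a).card < A.card := Finset.card_erase_lt_of_mem h
          have h2 : (A'.erase a).card ≤ A'.card := Finset.card_le_card (Finset.erase_subset _ _)
          omega
        · have h1 : (A.erase a).card ≤ A.card := Finset.card_le_card (Finset.erase_subset _ _)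
          have h2 : (A'.erase a).card < A'.card := Finset.card_erase_lt_of_mem h
          omega
      have hsub : ((A.erase a) ∪ (A'.erase a)) ×ˢ (nextB a A B y ∪ nextB a A' B' y) ⊆ T \ R := by
        intro e he
        rw [Finset.mem_product] at he
        obtain ⟨he1, he2⟩ := he
        have hne : e.1 ≠ a := by
          rcases Finset.mem_union.mp he1 with h | h
          · exact (Finset.mem_erase.mp h).1
          · exact (Finset.mem_erase.mp h).1
        have he1' : e.1 ∈ A ∪ A' := by
          rcases Finset.mem_union.mp he1 with h | h
          · exact Finset.mem_union_left _ (Finset.mem_of_mem_erase h)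
          · exact Finset.mem_union_right _ (Finset.mem_of_mem_erase h)
        have he2' : e.2 ∈ B ∪ B' := by
          rcases Finset.mem_union.mp he2 with h | h
          · exact Finset.mem_union_left _ (nextB_subset h)
          · exact Finset.mem_union_right _ (nextB_subset h)
        rw [Finset.mem_sdiff]
        refine ⟨hT (Finset.mem_product.mpr ⟨he1', he2'⟩), fun hc => hne ?_⟩
        rw [hRdef, Finset.mem_product, Finset.mem_singleton] at hc
        exact hc.1
      exact ih _ hlt (A.erase a) (nextB a A B y) (A'.erase a) (nextB a A' B' y) rfl
        (nextB_card_of_good hgoodf.1 hAB) (nextB_card_of_good hgoodf.2 hAB')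
        (T \ R) hsub
    · rw [if_neg hgood]
      refine Finset.sum_nonneg fun z _ => ?_
      split_ifs
      exacts [wgt_nonneg hp hq0 _ _, le_refl 0]
  calc (∏ k ∈ Finset.Icc 1 A.card, (1 - q ^ k)) * (∏ k ∈ Finset.Icc 1 A'.card, (1 - q ^ k))
      = ((if a ∈ A then 1 - q ^ (({a} ×ˢ B).card) else 1) *
          (if a ∈ A' then 1 - q ^ (({a} ×ˢ B').card) else 1)) * (c₁ * c₂) := by
        rw [hT1, hT2]; ring
    _ ≤ (∑ y ∈ R.powerset.filter (fun y => (a ∈ A → (y ∩ ({a} ×ˢ B)).Nonempty) ∧ (a ∈ A' → (y ∩ ({a} ×ˢ B')).Nonempty)), wgt p q R y) * (c₁ * c₂) :=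
        mul_le_mul_of_nonneg_right hgood_sum (mul_nonneg hc₁0 hc₂0)
    _ = ∑ y ∈ R.powerset,
          (if (a ∈ A → (y ∩ ({a} ×ˢ B)).Nonempty) ∧ (a ∈ A' → (y ∩ ({a} ×ˢ B')).Nonempty)
           then wgt p q R y * (c₁ * c₂) else 0) := by
        rw [Finset.sum_mul, Finset.sum_filter]
    _ ≤ ∑ y ∈ R.powerset, ∑ z ∈ (T \ R).powerset,
          (if gOk (fun i j => (i, j) ∈ y ∪ z) A B ∧ gOk (fun i j => (i, j) ∈ y ∪ z) A' B'
           then wgt p q T (y ∪ z) else 0) := Finset.sum_le_sum hinner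
    _ = ∑ x ∈ T.powerset,
          (if gOk (fun i j => (i, j) ∈ x) A B ∧ gOk (fun i j => (i, j) ∈ x) A' B'
           then wgt p q T x else 0) :=
        (sum_powerset_split R T hRT (fun x =>
          if gOk (fun i j => (i, j) ∈ x) A B ∧ gOk (fun i j => (i, j) ∈ x) A' B'
          then wgt p q T x else 0)).symm
    _ = _ := (Finset.sum_filter _ _).symm

end Core

end StableCorrAux

open StableCorrAux in
/-- The events that the stable matchings of two pairs of finite sets are perfect are
positively correlated:
`P(σ_{A,B}, σ_{A',B'} both perfect) ≥ ∏_{k=1}^{|A|}(1-q^k) ∏_{k=1}^{|A'|}(1-q^k)`. -/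
theorem stable_matchings_both_perfect_correlation
    {Ω : Type*} [MeasurableSpace Ω] (μ : Measure Ω) [IsProbabilityMeasure μ]
    (p q : ℝ) (hp0 : 0 < p) (hp1 : p ≤ 1) (hq : q = 1 - p)
    (C : ℤ × ℤ → Ω → Bool) (hmeas : ∀ e, Measurable (C e))
    (hind : iIndepFun C μ)
    (hBer : ∀ e, μ {ω | C e ω = true} = ENNReal.ofReal p)
    (A B A' B' : Finset ℤ) (hA : A.Nonempty) (hA' : A'.Nonempty)
    (hAB : A.card = B.card) (hAB' : A'.card = B'.card) :
    ENNReal.ofReal ((∏ k ∈ Finset.Icc 1 A.card, (1 - q ^ k)) *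
        ∏ k ∈ Finset.Icc 1 A'.card, (1 - q ^ k))
      ≤ μ ({ω | ∃ M : Finset (ℤ × ℤ),
              IsStableBipMatching (fun i j => C (i, j) ω = true) A B M ∧
              IsPerfectBipMatching A B M} ∩
           {ω | ∃ M : Finset (ℤ × ℤ),
              IsStableBipMatching (fun i j => C (i, j) ω = true) A' B' M ∧
              IsPerfectBipMatching A' B' M}) := by
  classical
  have hq0 : 0 ≤ q := by rw [hq]; linarith
  have hq1 : q ≤ 1 := by rw [hq]; linarith
  have hpq : p + q = 1 := by rw [hq]; ring
  set S : Finset (ℤ × ℤ) := (A ∪ A') ×ˢ (B ∪ B') with hSdef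
  have hcore := core p q hp0.le hq0 hq1 hpq (A.card + A'.card) A B A' B' rfl hAB hAB'
    S subset_rfl
  set Atom : Finset (ℤ × ℤ) → Set Ω :=
    fun x => ⋂ e ∈ S, C e ⁻¹' ({(if e ∈ x then true else false)} : Set Bool) with hAtomdef
  have hAtomMem : ∀ x, ∀ ω : Ω,
      ω ∈ Atom x ↔ ∀ e ∈ S, C e ω = (if e ∈ x then true else false) := by
    intro x ω
    rw [hAtomdef]
    simp
  have hAtomMeas : ∀ x, MeasurableSet (Atom x) := by
    intro x
    rw [hAtomdef]
    exact MeasurableSet.biInter (S.countable_toSet)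
      (fun e _ => hmeas e (MeasurableSet.singleton _))
  have hfalse : ∀ e, μ (C e ⁻¹' ({false} : Set Bool)) = ENNReal.ofReal q := by
    intro e
    have hset : C e ⁻¹' ({false} : Set Bool) = {ω | C e ω = true}ᶜ := by
      ext ω; simp
    rw [hset, measure_compl (show MeasurableSet {ω | C e ω = true} from
        hmeas e (MeasurableSet.singleton true)) (measure_ne_top μ _),
      hBer e, measure_univ, hq, ← ENNReal.ofReal_one, ← ENNReal.ofReal_sub 1 hp0.le]
  have hAtomμ : ∀ x, μ (Atom x) = ENNReal.ofReal (wgt p q S x) := by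
    intro x
    rw [hAtomdef]
    rw [hind.meas_biInter (fun e _ =>
      ⟨({(if e ∈ x then true else false)} : Set Bool), MeasurableSet.singleton _, rfl⟩)]
    rw [wgt, ENNReal.ofReal_prod_of_nonneg (fun e _ => by positivity)]
    refine Finset.prod_congr rfl fun e _ => ?_
    by_cases hex : e ∈ x
    · simp only [if_pos hex]
      rw [← hBer e]
      rfl
    · simp only [if_neg hex]
      exact hfalse e
  -- the event contains the union of the good atoms
  have hsubset : ∀ x ∈ S.powerset.filter (fun x =>
        gOk (fun i j => (i, j) ∈ x) A B ∧ gOk (fun i j => (i, j) ∈ x) A' B'),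
      Atom x ⊆ ({ω | ∃ M : Finset (ℤ × ℤ),
          IsStableBipMatching (fun i j => C (i, j) ω = true) A B M ∧
          IsPerfectBipMatching A B M} ∩
        {ω | ∃ M : Finset (ℤ × ℤ),
          IsStableBipMatching (fun i j => C (i, j) ω = true) A' B' M ∧
          IsPerfectBipMatching A' B' M}) := by
    intro x hx ω hω
    rw [Finset.mem_filter] at hx
    obtain ⟨hxS, hg1, hg2⟩ := hx
    rw [hAtomMem] at hω
    have hrel : ∀ i ∈ A ∪ A', ∀ j ∈ B ∪ B',
        ((C (i, j) ω = true) ↔ (i, j) ∈ x) := by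
      intro i hi j hj
      have := hω (i, j) (Finset.mem_product.mpr ⟨hi, hj⟩)
      by_cases hexy : (i, j) ∈ x
      · simp only [if_pos hexy] at this
        simp [this, hexy]
      · simp only [if_neg hexy] at this
        simp [this, hexy]
    constructor
    · have hgw : gOk (fun i j => C (i, j) ω = true) A B := by
        rw [gOk_congr (fun i j => C (i, j) ω = true) (fun i j => (i, j) ∈ x) A B
          (fun i hi j hj => hrel i (Finset.mem_union_left _ hi) j (Finset.mem_union_left _ hj))]
        exact hg1
      exact gOk_stable _ A B hAB hgw
    · have hgw : gOk (fun i j => C (i, j) ω = true) A' B' := by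
        rw [gOk_congr (fun i j => C (i, j) ω = true) (fun i j => (i, j) ∈ x) A' B'
          (fun i hi j hj =>
            hrel i (Finset.mem_union_right _ hi) j (Finset.mem_union_right _ hj))]
        exact hg2
      exact gOk_stable _ A' B' hAB' hgw
  -- pairwise disjointness of atoms
  have hdisj : Set.PairwiseDisjoint
      ↑(S.powerset.filter (fun x =>
        gOk (fun i j => (i, j) ∈ x) A B ∧ gOk (fun i j => (i, j) ∈ x) A' B')) Atom := by
    intro x hx x' hx' hne
    simp only [Finset.coe_filter, Set.mem_setOf_eq] at hx hx'
    have hxS : x ⊆ S := Finset.mem_powerset.mp hx.1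
    have hx'S : x' ⊆ S := Finset.mem_powerset.mp hx'.1
    obtain ⟨e, he⟩ : ∃ e, ¬ (e ∈ x ↔ e ∈ x') := by
      by_contra hcon
      push_neg at hcon
      exact hne (Finset.ext fun e => (hcon e))
    have heS : e ∈ S := by
      by_cases hex : e ∈ x
      · exact hxS hex
      · have : e ∈ x' := by tauto
        exact hx'S this
    refine Set.disjoint_left.mpr fun ω h1 h2 => ?_
    rw [hAtomMem] at h1 h2
    have v1 := h1 e heS
    have v2 := h2 e heS
    by_cases hex : e ∈ x <;> by_cases hex' : e ∈ x' <;>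
      simp [hex, hex'] at v1 v2 he <;> simp [v1] at v2
  -- put everything together
  calc ENNReal.ofReal ((∏ k ∈ Finset.Icc 1 A.card, (1 - q ^ k)) *
        ∏ k ∈ Finset.Icc 1 A'.card, (1 - q ^ k))
      ≤ ENNReal.ofReal (∑ x ∈ S.powerset.filter (fun x =>
          gOk (fun i j => (i, j) ∈ x) A B ∧ gOk (fun i j => (i, j) ∈ x) A' B'),
          wgt p q S x) := ENNReal.ofReal_le_ofReal hcore
    _ = ∑ x ∈ S.powerset.filter (fun x =>
          gOk (fun i j => (i, j) ∈ x) A B ∧ gOk (fun i j => (i, j) ∈ x) A' B'),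
          ENNReal.ofReal (wgt p q S x) :=
        ENNReal.ofReal_sum_of_nonneg (fun x _ => wgt_nonneg hp0.le hq0 _ _)
    _ = ∑ x ∈ S.powerset.filter (fun x =>
          gOk (fun i j => (i, j) ∈ x) A B ∧ gOk (fun i j => (i, j) ∈ x) A' B'),
          μ (Atom x) := by
        refine Finset.sum_congr rfl fun x _ => ?_
        rw [hAtomμ]
    _ = μ (⋃ x ∈ S.powerset.filter (fun x =>
          gOk (fun i j => (i, j) ∈ x) A B ∧ gOk (fun i j => (i, j) ∈ x) A' B'),
          Atom x) := (measure_biUnion_finset hdisj (fun x _ => hAtomMeas x)).symm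
    _ ≤ _ := by
        refine measure_mono ?_
        refine Set.iUnion₂_subset ?_
        exact hsubset
end

section
/- Let σ be a bijection ℤ → ℤ whose flow L₊(σ,i+1/2) − L₋(σ,i+1/2) is finite. If this quantity is finite for one value of i, then it is finite for all i; moreover, local finiteness at one value of i implies local finiteness at every value of i. -/
/-- For a bijection `σ : ℤ → ℤ`, local finiteness at one value of `i` (finitely many
edges crossing `i + 1/2` in each direction) implies local finiteness at every value. -/
theorem locally_finite_of_locally_finite_at (σ : ℤ ≃ ℤ) (i : ℤ)
    (hplus : {j : ℤ | j ≤ i ∧ i < σ j}.Finite) (hminus : {j : ℤ | i < j ∧ σ j ≤ i}.Finite) :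
    ∀ k : ℤ, {j : ℤ | j ≤ k ∧ k < σ j}.Finite ∧ {j : ℤ | k < j ∧ σ j ≤ k}.Finite := by
  intro k
  have hpre1 : (σ ⁻¹' (Set.Ioc k i)).Finite :=
    (Set.finite_Ioc k i).preimage (σ.injective.injOn)
  have hpre2 : (σ ⁻¹' (Set.Ioc i k)).Finite :=
    (Set.finite_Ioc i k).preimage (σ.injective.injOn)
  constructor
  · refine Set.Finite.subset (hplus.union ((Set.finite_Ioc i k).union hpre1)) ?_
    rintro j ⟨hj, hσj⟩
    by_cases h1 : j ≤ i
    · by_cases h2 : i < σ j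
      · exact Or.inl ⟨h1, h2⟩
      · exact Or.inr (Or.inr ⟨hσj, le_of_not_gt h2⟩)
    · exact Or.inr (Or.inl ⟨lt_of_not_ge h1, hj⟩)
  · refine Set.Finite.subset (hminus.union ((Set.finite_Ioc k i).union hpre2)) ?_
    rintro j ⟨hj, hσj⟩
    by_cases h1 : i < j
    · by_cases h2 : σ j ≤ i
      · exact Or.inl ⟨h1, h2⟩
      · exact Or.inr (Or.inr ⟨lt_of_not_ge h2, hσj⟩)
    · exact Or.inr (Or.inl ⟨hj, le_of_not_gt h1⟩)
end

section
/- Let σ be a locally finite perfect matching (bijection) of ℤ, and suppose T < T' are consecutive cuts of σ, i.e., both T + 1/2 and T' + 1/2 are cuts of σ. Then for every j with T ≤ j ≤ T', the maximum length M(σ, j+1/2) of an edge crossing j + 1/2 satisfies M(σ, j+1/2) ≤ T' − T. -/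
/-- If `T + 1/2` and `T' + 1/2` are both cuts of a bijection `σ : ℤ → ℤ` with `T < T'`,
then every edge of `σ` crossing `j + 1/2` for `T ≤ j ≤ T'` has length at most `T' − T`;
that is, `M(σ, j + 1/2) ≤ T' − T`. -/
theorem crossing_edge_length_le_of_cuts (σ : ℤ ≃ ℤ) (T T' : ℤ) (hTT' : T < T')
    (hT : ∀ j : ℤ, σ j ≤ T ↔ j ≤ T) (hT' : ∀ j : ℤ, σ j ≤ T' ↔ j ≤ T') :
    ∀ j : ℤ, T ≤ j → j ≤ T' →
      ∀ k : ℤ, ((k ≤ j ∧ j < σ k) ∨ (σ k ≤ j ∧ j < k)) → |σ k - k| ≤ T' - T := by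
  intro j hj1 hj2 k hk
  have h1 := hT k
  have h2 := hT' k
  rcases hk with ⟨h3, h4⟩ | ⟨h3, h4⟩ <;> rw [abs_le] <;> omega
end

section
/- Let p ∈ (0,1], let n' ≤ n be integers, let m ≥ 0, and let σ and σ' be the unique stable matchings of the random bipartite graphs K_{(-∞,m],(-∞,m+n]}(p) and K_{(-∞,m],(-∞,m+n']}(p) respectively (same underlying compatibility randomness). Then almost surely σ'(i) ≤ σ(i) for every i ≤ m, and σ'⁻¹(j) ≥ σ⁻¹(j) for every j ≤ m + n' (with the convention -∞ ≤ k). That is, when the pool of females is enlarged, no male does worse and no female does better. -/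
/-- Monotonicity of stable matchings in the female pool (finitary version): if `M` and `M'`
are stable matchings of the compatibility graphs with male interval `I = [a, m]` and female
intervals `J = [b, m + n]` and `J' = [b, m + n']` respectively, where `n' ≤ n`, then no male
does better in `M'` than in `M` (`σ'(i) ≤ σ(i)`, with unmatched treated as `-∞`), and no
female in `J'` does worse (`σ'⁻¹(j) ≥ σ⁻¹(j)`). -/
theorem stable_matching_monotone_in_female_pool
    (E : ℤ → ℤ → Prop) (a b m n n' : ℤ) (hm : 0 ≤ m) (hnn' : n' ≤ n)
    (M M' : Finset (ℤ × ℤ))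
    (hM : IsStableBipMatching E (Finset.Icc a m) (Finset.Icc b (m + n)) M)
    (hM' : IsStableBipMatching E (Finset.Icc a m) (Finset.Icc b (m + n')) M') :
    (∀ i j', (i, j') ∈ M' → ∃ j, (i, j) ∈ M ∧ j' ≤ j) ∧
    (∀ i j, (i, j) ∈ M → j ≤ m + n' → ∃ i', (i', j) ∈ M' ∧ i ≤ i') := by
  obtain ⟨⟨hMmem, hMl, hMr⟩, hMstab⟩ := hM
  obtain ⟨⟨hM'mem, hM'l, hM'r⟩, hM'stab⟩ := hM'
  -- `Bad i` : male `i` does strictly better in `M'` than in `M`.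
  set Bad : ℤ → Prop := fun i => ∃ j', (i, j') ∈ M' ∧ ∀ j, (i, j) ∈ M → j < j' with hBadDef
  -- A bad male gives rise to a strictly larger bad male (still ≤ m).
  have key : ∀ i, Bad i → ∃ i₁, i < i₁ ∧ i₁ ≤ m ∧ Bad i₁ := by
    rintro i ⟨j', hij', hlt⟩
    obtain ⟨hiA, hj'B', hE⟩ := hM'mem _ hij'
    have hj'B : j' ∈ Finset.Icc b (m + n) := by
      simp only [Finset.mem_Icc] at hj'B' ⊢
      exact ⟨hj'B'.1, by linarith [hj'B'.2]⟩
    -- (i, j') would be a blocking pair for M unless some i₁ ≥ i has (i₁,j') ∈ M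
    have h1 : ¬ ∀ i', (i', j') ∈ M → i' < i := by
      intro hall
      exact hMstab ⟨i, hiA, j', hj'B, hE, hlt, hall⟩
    push_neg at h1
    obtain ⟨i₁, hi₁M, hii₁⟩ := h1
    have hne : i < i₁ := by
      rcases lt_or_eq_of_le hii₁ with h | h
      · exact h
      · exact absurd (hlt _ (h ▸ hi₁M)) (lt_irrefl j')
    obtain ⟨hi₁A, hj'Bb, hE₁⟩ := hMmem _ hi₁M
    -- every M'-partner of j' is i, hence < i₁
    have hfem : ∀ i', (i', j') ∈ M' → i' < i₁ := by
      intro i' h'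
      have h2 : (i', j') = (i, j') := hM'r _ h' _ hij' rfl
      injection h2 with h2a _
      exact h2a ▸ hne
    -- (i₁, j') would block M' unless i₁ has a partner j₁ ≥ j' in M'
    have h2 : ¬ ∀ jm, (i₁, jm) ∈ M' → jm < j' := by
      intro hall
      exact hM'stab ⟨i₁, hi₁A, j', hj'B', hE₁, hall, hfem⟩
    push_neg at h2
    obtain ⟨j₁, hj₁, hj'j₁⟩ := h2
    have hj'lt : j' < j₁ := by
      rcases lt_or_eq_of_le hj'j₁ with h | h
      · exact h
      · exact absurd (hfem _ (h ▸ hj₁)) (lt_irrefl i₁)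
    refine ⟨i₁, hne, (Finset.mem_Icc.mp hi₁A).2, j₁, hj₁, ?_⟩
    intro j hj
    have h3 : (i₁, j) = (i₁, j') := hMl _ hj _ hi₁M rfl
    injection h3 with _ h3b
    exact h3b ▸ hj'lt
  -- no bad males, by ascent bounded by m
  have noBad : ∀ k : ℕ, ∀ i, (m - i).toNat ≤ k → ¬ Bad i := by
    intro k
    induction k with
    | zero =>
      intro i h hb
      obtain ⟨i₁, h1, h2, _⟩ := key i hb
      omega
    | succ k ih =>
      intro i h hb
      obtain ⟨i₁, h1, h2, hb₁⟩ := key i hb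
      exact ih i₁ (by omega) hb₁
  have noBad' : ∀ i, ¬ Bad i := fun i => noBad (m - i).toNat i le_rfl
  constructor
  · intro i j' hij'
    by_contra hcon
    push_neg at hcon
    exact noBad' i ⟨j', hij', fun j hj => lt_of_not_ge fun hle =>
      absurd hle (not_le.mpr (hcon j hj))⟩
  · intro i j hijM hjle
    by_contra hcon
    push_neg at hcon
    have hfem : ∀ i', (i', j) ∈ M' → i' < i := fun i' h' => hcon i' h'
    obtain ⟨hiA, hjB, hE⟩ := hMmem _ hijM
    have hjB' : j ∈ Finset.Icc b (m + n') := by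
      simp only [Finset.mem_Icc] at hjB ⊢
      exact ⟨hjB.1, hjle⟩
    have h2 : ¬ ∀ jm, (i, jm) ∈ M' → jm < j := by
      intro hall
      exact hM'stab ⟨i, hiA, j, hjB', hE, hall, hfem⟩
    push_neg at h2
    obtain ⟨j₁, hj₁, hjj₁⟩ := h2
    have hjlt : j < j₁ := by
      rcases lt_or_eq_of_le hjj₁ with h | h
      · exact h
      · exact absurd (hfem _ (h ▸ hj₁)) (lt_irrefl i)
    refine noBad' i ⟨j₁, hj₁, ?_⟩
    intro jm hjm
    have h3 : (i, jm) = (i, j) := hMl _ hjm _ hijM rfl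
    injection h3 with _ h3b
    exact h3b ▸ hjlt
end
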